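/- arXiv:1405.5620 — 3 statements merged into one kernel-verified Lean document; each statement's English description precedes it below -/
import Mathlib

section
/- For q ≥ 2 and m ≥ 1, the proportion p_{q,n} of elements of S_n having no cycle of length divisible by q is the same for all n in {mq, mq+1, ..., mq+q-1}. -/
def NoCycleLenMulOf {n : ℕ} (q : ℕ) (σ : Equiv.Perm (Fin n)) : Prop :=
  ∀ x : Fin n, ¬ q ∣ Function.minimalPeriod σ x

/-- The proportion of elements of `S_n` with no cycle of length divisible by `q`. -/
noncomputable def propNoCycleMul (q n : ℕ) : ℚ :=
  ({σ : Equiv.Perm (Fin n) | NoCycleLenMulOf q σ}.ncard : ℚ) / (n.factorial : ℚ)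

open Equiv Equiv.Perm Function Finset

namespace NCAux
open scoped Classical




/-- split a subtype count by a predicate -/
lemma card_split {α : Type*} [Finite α] (P R : α → Prop) :
    Nat.card {x // R x} = Nat.card {x // P x ∧ R x} + Nat.card {x // ¬ P x ∧ R x} := by
  classical
  rw [← Nat.card_sum]
  apply Nat.card_congr
  exact {
    toFun := fun x => if h : P x.1 then .inl ⟨x.1, h, x.2⟩ else .inr ⟨x.1, h, x.2⟩
    invFun := fun x => x.elim (fun a => ⟨a.1, a.2.2⟩) (fun a => ⟨a.1, a.2.2⟩)
    left_inv := fun x => by by_cases h : P x.1 <;> simp [h]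
    right_inv := fun x => by
      rcases x with ⟨a, ha, _⟩ | ⟨a, ha, _⟩ <;> simp [ha] }

lemma card_sigma' {ι : Type*} [Fintype ι] (f : ι → Type*) [∀ i, Finite (f i)] :
    Nat.card (Σ i, f i) = ∑ i, Nat.card (f i) := by
  classical
  letI : ∀ i, Fintype (f i) := fun i => Fintype.ofFinite _
  simp [Nat.card_eq_fintype_card, Fintype.card_sigma]

lemma perm_per_pos {m : ℕ} (σ : Perm (Fin m)) (x : Fin m) :
    0 < Function.minimalPeriod ⇑σ x := by
  apply IsPeriodicPt.minimalPeriod_pos (orderOf_pos σ)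
  show _ = _
  rw [iterate_eq_pow, pow_orderOf_eq_one]
  rfl

lemma perm_pow_fix {m : ℕ} {σ : Perm (Fin m)} {x : Fin m} {n : ℕ}
    (h : (σ ^ n) x = x) : Function.minimalPeriod ⇑σ x ∣ n := by
  apply IsPeriodicPt.minimalPeriod_dvd
  show _ = _
  rwa [iterate_eq_pow]

lemma perm_per_apply {m : ℕ} (σ : Perm (Fin m)) (x : Fin m) :
    (σ ^ Function.minimalPeriod ⇑σ x) x = x := by
  have := Function.iterate_minimalPeriod (f := ⇑σ) (x := x)
  rwa [iterate_eq_pow] at this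

lemma perm_per_eq {m k : ℕ} (σ : Perm (Fin m)) (τ : Perm (Fin k)) (x : Fin m) (y : Fin k)
    (h : ∀ n : ℕ, (σ ^ n) x = x ↔ (τ ^ n) y = y) :
    Function.minimalPeriod ⇑σ x = Function.minimalPeriod ⇑τ y := by
  rw [Function.minimalPeriod_eq_minimalPeriod_iff]
  intro n
  have := h n
  simp only [IsPeriodicPt, IsFixedPt, iterate_eq_pow]
  exact this

lemma conj_pow_apply {m : ℕ} (c σ : Perm (Fin m)) (n : ℕ) (x : Fin m) :
    ((c * σ * c⁻¹) ^ n) (c x) = c ((σ ^ n) x) := by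
  rw [conj_pow]
  simp [Equiv.Perm.mul_apply]

lemma conj_per {m : ℕ} (c σ : Perm (Fin m)) (x : Fin m) :
    Function.minimalPeriod ⇑(c * σ * c⁻¹) (c x) = Function.minimalPeriod ⇑σ x := by
  apply perm_per_eq
  intro n
  rw [conj_pow_apply]
  exact EmbeddingLike.apply_eq_iff_eq c

lemma sameCycle_per {m : ℕ} (σ : Perm (Fin m)) {a b : Fin m} (h : σ.SameCycle a b) :
    Function.minimalPeriod ⇑σ a = Function.minimalPeriod ⇑σ b := by
  obtain ⟨i, -, rfl⟩ := h.exists_pow_eq'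
  apply perm_per_eq
  intro n
  rw [← Equiv.Perm.mul_apply, ← pow_add, add_comm, pow_add, Equiv.Perm.mul_apply]
  exact (EmbeddingLike.apply_eq_iff_eq (σ ^ i)).symm


section Zero
variable {n : ℕ} (τ : Perm (Fin (n + 1)))

lemma d0_zero : Equiv.Perm.decomposeFin.symm ((0 : Fin (n + 2)), τ) 0 = 0 :=
  Equiv.Perm.decomposeFin_symm_apply_zero 0 τ

lemma d0_succ (x : Fin (n + 1)) :
    Equiv.Perm.decomposeFin.symm ((0 : Fin (n + 2)), τ) x.succ = (τ x).succ := by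
  rw [Equiv.Perm.decomposeFin_symm_apply_succ, Equiv.swap_self]
  rfl

lemma d0_pow_succ (j : ℕ) (x : Fin (n + 1)) :
    (Equiv.Perm.decomposeFin.symm ((0 : Fin (n + 2)), τ) ^ j) x.succ = ((τ ^ j) x).succ := by
  induction j with
  | zero => rfl
  | succ j ih =>
    rw [pow_succ', pow_succ', Equiv.Perm.mul_apply, Equiv.Perm.mul_apply, ih, d0_succ]

lemma d0_per_zero :
    Function.minimalPeriod ⇑(Equiv.Perm.decomposeFin.symm ((0 : Fin (n + 2)), τ)) 0 = 1 :=
  Function.minimalPeriod_eq_one_iff_isFixedPt.mpr (d0_zero τ)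

lemma d0_per_succ (x : Fin (n + 1)) :
    Function.minimalPeriod ⇑(Equiv.Perm.decomposeFin.symm ((0 : Fin (n + 2)), τ)) x.succ =
      Function.minimalPeriod ⇑τ x := by
  apply perm_per_eq
  intro k
  rw [d0_pow_succ]
  exact Fin.succ_inj

lemma d0_not_sameCycle (x : Fin (n + 1)) :
    ¬ (Equiv.Perm.decomposeFin.symm ((0 : Fin (n + 2)), τ)).SameCycle 0 x.succ := by
  rintro ⟨i, hi⟩
  have : (Equiv.Perm.decomposeFin.symm ((0 : Fin (n + 2)), τ) ^ i) 0 = 0 :=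
    Function.IsFixedPt.perm_zpow (d0_zero τ) i
  rw [hi] at this
  exact Fin.succ_ne_zero x this

end Zero

section Succ
variable {n : ℕ} (τ : Perm (Fin (n + 1))) (p' : Fin (n + 1))

lemma ds_zero : Equiv.Perm.decomposeFin.symm (p'.succ, τ) 0 = p'.succ :=
  Equiv.Perm.decomposeFin_symm_apply_zero _ τ

lemma ds_succ_eq {x : Fin (n + 1)} (h : τ x = p') :
    Equiv.Perm.decomposeFin.symm (p'.succ, τ) x.succ = 0 := by
  rw [Equiv.Perm.decomposeFin_symm_apply_succ, h, Equiv.swap_apply_right]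

lemma ds_succ_ne {x : Fin (n + 1)} (h : τ x ≠ p') :
    Equiv.Perm.decomposeFin.symm (p'.succ, τ) x.succ = (τ x).succ := by
  rw [Equiv.Perm.decomposeFin_symm_apply_succ]
  apply Equiv.swap_apply_of_ne_of_ne (Fin.succ_ne_zero _)
  exact fun hc => h (Fin.succ_inj.mp hc)

lemma ds_iter : ∀ j, j < Function.minimalPeriod ⇑τ p' →
    (Equiv.Perm.decomposeFin.symm (p'.succ, τ) ^ (j + 1)) 0 = ((τ ^ j) p').succ := by
  intro j
  induction j with
  | zero =>
    intro _
    rw [pow_one, ds_zero]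
    rfl
  | succ j ih =>
    intro hj
    have hj' : j < Function.minimalPeriod ⇑τ p' := Nat.lt_of_succ_lt hj
    rw [pow_succ', Equiv.Perm.mul_apply, ih hj']
    have hne : τ ((τ ^ j) p') ≠ p' := by
      intro hc
      have h1 : (τ ^ (j + 1)) p' = p' := by
        rw [pow_succ', Equiv.Perm.mul_apply]; exact hc
      have hdvd := perm_pow_fix h1
      have := Nat.le_of_dvd (Nat.succ_pos j) hdvd
      omega
    rw [ds_succ_ne τ p' hne]
    congr 1
    rw [pow_succ', Equiv.Perm.mul_apply]

lemma ds_per_zero :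
    Function.minimalPeriod ⇑(Equiv.Perm.decomposeFin.symm (p'.succ, τ)) 0 =
      Function.minimalPeriod ⇑τ p' + 1 := by
  have hl : 0 < Function.minimalPeriod ⇑τ p' := perm_per_pos τ p'
  have hper : (Equiv.Perm.decomposeFin.symm (p'.succ, τ) ^
      (Function.minimalPeriod ⇑τ p' + 1)) 0 = 0 := by
    have h1 : (Equiv.Perm.decomposeFin.symm (p'.succ, τ) ^ Function.minimalPeriod ⇑τ p') 0 =
        ((τ ^ (Function.minimalPeriod ⇑τ p' - 1)) p').succ := by
      have := ds_iter τ p' (Function.minimalPeriod ⇑τ p' - 1) (by omega)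
      rwa [Nat.sub_add_cancel hl] at this
    rw [pow_succ', Equiv.Perm.mul_apply, h1]
    apply ds_succ_eq
    have h2 : (τ ^ Function.minimalPeriod ⇑τ p') p' = p' := perm_per_apply τ p'
    calc τ ((τ ^ (Function.minimalPeriod ⇑τ p' - 1)) p')
        = (τ ^ (Function.minimalPeriod ⇑τ p' - 1 + 1)) p' := by
          rw [pow_succ', Equiv.Perm.mul_apply]
      _ = p' := by rw [Nat.sub_add_cancel hl]; exact h2
  have hdvd := perm_pow_fix hper
  have hpos : 0 < Function.minimalPeriod ⇑(Equiv.Perm.decomposeFin.symm (p'.succ, τ)) 0 :=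
    perm_per_pos _ _
  have hle := Nat.le_of_dvd (Nat.succ_pos _) hdvd
  rcases Nat.lt_or_ge (Function.minimalPeriod ⇑(Equiv.Perm.decomposeFin.symm (p'.succ, τ)) 0)
      (Function.minimalPeriod ⇑τ p' + 1) with hlt | hge
  · exfalso
    have h1 : (Equiv.Perm.decomposeFin.symm (p'.succ, τ) ^
        Function.minimalPeriod ⇑(Equiv.Perm.decomposeFin.symm (p'.succ, τ)) 0) 0 =
        ((τ ^ (Function.minimalPeriod ⇑(Equiv.Perm.decomposeFin.symm (p'.succ, τ)) 0 - 1)) p').succ := by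
      have := ds_iter τ p'
        (Function.minimalPeriod ⇑(Equiv.Perm.decomposeFin.symm (p'.succ, τ)) 0 - 1) (by omega)
      rwa [Nat.sub_add_cancel hpos] at this
    have h2 := perm_per_apply (Equiv.Perm.decomposeFin.symm (p'.succ, τ)) 0
    rw [h1] at h2
    exact Fin.succ_ne_zero _ h2
  · omega

lemma ds_pow_succ {x : Fin (n + 1)} (hx : ∀ j : ℕ, (τ ^ j) x ≠ p') (j : ℕ) :
    (Equiv.Perm.decomposeFin.symm (p'.succ, τ) ^ j) x.succ = ((τ ^ j) x).succ := by
  induction j with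
  | zero => rfl
  | succ j ih =>
    rw [pow_succ', pow_succ', Equiv.Perm.mul_apply, Equiv.Perm.mul_apply, ih]
    apply ds_succ_ne
    intro hc
    have : (τ ^ (j + 1)) x = p' := by rw [pow_succ', Equiv.Perm.mul_apply]; exact hc
    exact hx (j + 1) this

lemma ds_nomem {x : Fin (n + 1)} (hx : ¬ τ.SameCycle p' x) : ∀ j : ℕ, (τ ^ j) x ≠ p' :=
  fun j hc => hx (Equiv.Perm.SameCycle.symm ⟨(j : ℤ), by rw [zpow_natCast]; exact hc⟩)

lemma ds_per_succ {x : Fin (n + 1)} (hx : ¬ τ.SameCycle p' x) :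
    Function.minimalPeriod ⇑(Equiv.Perm.decomposeFin.symm (p'.succ, τ)) x.succ =
      Function.minimalPeriod ⇑τ x := by
  apply perm_per_eq
  intro k
  rw [ds_pow_succ τ p' (ds_nomem τ p' hx)]
  exact Fin.succ_inj

lemma ds_sameCycle (x : Fin (n + 1)) :
    (Equiv.Perm.decomposeFin.symm (p'.succ, τ)).SameCycle 0 x.succ ↔ τ.SameCycle p' x := by
  have hl : 0 < Function.minimalPeriod ⇑τ p' := perm_per_pos τ p'
  constructor
  · intro h
    obtain ⟨i, -, hi⟩ := h.exists_pow_eq'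
    set j := i % (Function.minimalPeriod ⇑τ p' + 1) with hj
    have hjlt : j < Function.minimalPeriod ⇑τ p' + 1 := Nat.mod_lt _ (Nat.succ_pos _)
    have hij : (Equiv.Perm.decomposeFin.symm (p'.succ, τ) ^ j) 0 =
        (Equiv.Perm.decomposeFin.symm (p'.succ, τ) ^ i) 0 := by
      have := Function.iterate_mod_minimalPeriod_eq
        (f := ⇑(Equiv.Perm.decomposeFin.symm (p'.succ, τ))) (x := (0 : Fin (n+2))) (n := i)
      rw [ds_per_zero] at this
      simpa [iterate_eq_pow] using this
    rw [hi] at hij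
    rcases Nat.eq_zero_or_pos j with hj0 | hjpos
    · rw [hj0] at hij
      exact absurd hij.symm (Fin.succ_ne_zero x)
    · have hiter := ds_iter τ p' (j - 1) (by omega)
      rw [Nat.sub_add_cancel hjpos] at hiter
      rw [hiter] at hij
      exact ⟨((j - 1 : ℕ) : ℤ), by rw [zpow_natCast]; exact Fin.succ_inj.mp hij⟩
  · intro h
    obtain ⟨i, -, hi⟩ := h.exists_pow_eq'
    set j := i % Function.minimalPeriod ⇑τ p' with hj
    have hjlt : j < Function.minimalPeriod ⇑τ p' := Nat.mod_lt _ hl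
    have hij : (τ ^ j) p' = (τ ^ i) p' := by
      have := Function.iterate_mod_minimalPeriod_eq (f := ⇑τ) (x := p') (n := i)
      simp only [iterate_eq_pow] at this
      exact this
    refine ⟨((j + 1 : ℕ) : ℤ), ?_⟩
    rw [zpow_natCast, ds_iter τ p' j hjlt, hij, hi]

end Succ


/-- count of permutations whose cycle through the marked point `z` has length satisfying `C`,
and all other cycles have length not divisible by `q`. -/
noncomputable def MC (q : ℕ) (C : ℕ → Prop) {m : ℕ} (z : Fin m) : ℕ :=
  Nat.card {σ : Perm (Fin m) // C (Function.minimalPeriod ⇑σ z) ∧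
    ∀ x, ¬ σ.SameCycle z x → ¬ q ∣ Function.minimalPeriod ⇑σ x}

/-- count of permutations all of whose cycle lengths are not divisible by `q`. -/
noncomputable def Ag (q n : ℕ) : ℕ :=
  Nat.card {σ : Perm (Fin n) // ∀ x, ¬ q ∣ Function.minimalPeriod ⇑σ x}

lemma MC_congr {q : ℕ} {C C' : ℕ → Prop} {m : ℕ} (z : Fin m) (h : ∀ ℓ, C ℓ ↔ C' ℓ) :
    MC q C z = MC q C' z :=
  Nat.card_congr (Equiv.subtypeEquiv (Equiv.refl _) (fun σ => by
    simp only [Equiv.refl_apply]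
    exact and_congr_left' (h _)))

lemma marked_iff {q m : ℕ} (C : ℕ → Prop) (c σ : Perm (Fin m)) (w : Fin m) :
    (C (Function.minimalPeriod ⇑σ w) ∧
      ∀ x, ¬ σ.SameCycle w x → ¬ q ∣ Function.minimalPeriod ⇑σ x) ↔
    (C (Function.minimalPeriod ⇑(c * σ * c⁻¹) (c w)) ∧
      ∀ x, ¬ (c * σ * c⁻¹).SameCycle (c w) x → ¬ q ∣ Function.minimalPeriod ⇑(c * σ * c⁻¹) x) := by
  rw [conj_per]
  apply and_congr_right'
  constructor
  · intro h2 x hx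
    have hper : Function.minimalPeriod ⇑(c * σ * c⁻¹) x = Function.minimalPeriod ⇑σ (c⁻¹ x) := by
      conv_lhs => rw [← Equiv.apply_symm_apply c x]
      rw [conj_per]
      rfl
    rw [hper]
    apply h2
    intro hc
    apply hx
    rw [Equiv.Perm.sameCycle_conj, Equiv.Perm.coe_inv, Equiv.symm_apply_apply]
    exact hc
  · intro h2 x hx
    have hper : Function.minimalPeriod ⇑σ x = Function.minimalPeriod ⇑(c * σ * c⁻¹) (c x) := by
      rw [conj_per]
    rw [hper]
    apply h2
    intro hc
    apply hx
    rw [Equiv.Perm.sameCycle_conj, Equiv.Perm.coe_inv, Equiv.symm_apply_apply, Equiv.symm_apply_apply] at hc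
    exact hc

lemma MC_marked {q : ℕ} {C : ℕ → Prop} {m : ℕ} (z w : Fin m) :
    MC q C z = MC q C w := by
  apply Nat.card_congr
  refine Equiv.subtypeEquiv
    (MulAut.conj (Equiv.swap z w) : Perm (Fin m) ≃* Perm (Fin m)).toEquiv (fun σ => ?_)
  have hz : Equiv.swap z w z = w := Equiv.swap_apply_left z w
  have := marked_iff (q := q) C (Equiv.swap z w) σ z
  rw [hz] at this
  exact this

lemma Ag_eq_MC (q n : ℕ) : Ag q (n + 1) = MC q (fun ℓ => ¬ q ∣ ℓ) (0 : Fin (n + 1)) := by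
  apply Nat.card_congr
  refine Equiv.subtypeEquiv (Equiv.refl _) (fun σ => ?_)
  simp only [Equiv.refl_apply]
  constructor
  · intro h
    exact ⟨h 0, fun x _ => h x⟩
  · rintro ⟨h1, h2⟩ x
    by_cases hx : σ.SameCycle 0 x
    · rw [← sameCycle_per σ hx]
      exact h1
    · exact h2 x hx

/-- the key recursion, via `decomposeFin`. -/
lemma MC_rec (q : ℕ) (C : ℕ → Prop) (n : ℕ) :
    MC q C (0 : Fin (n + 2)) =
      (if C 1 then Ag q (n + 1) else 0) + (n + 1) * MC q (fun ℓ => C (ℓ + 1)) (0 : Fin (n + 1)) := by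
  classical
  set P : Perm (Fin (n + 2)) → Prop := fun σ =>
    C (Function.minimalPeriod ⇑σ 0) ∧
      ∀ x, ¬ σ.SameCycle 0 x → ¬ q ∣ Function.minimalPeriod ⇑σ x with hP
  have h1 : MC q C (0 : Fin (n + 2)) =
      Nat.card {pr : Fin (n + 2) × Perm (Fin (n + 1)) // P (Equiv.Perm.decomposeFin.symm pr)} := by
    apply Nat.card_congr
    exact Equiv.subtypeEquiv Equiv.Perm.decomposeFin (fun σ =>
      iff_of_eq (congrArg P (Equiv.symm_apply_apply _ σ).symm))
  have h2 : Nat.card {pr : Fin (n + 2) × Perm (Fin (n + 1)) // P (Equiv.Perm.decomposeFin.symm pr)}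
      = ∑ p : Fin (n + 2), Nat.card {τ : Perm (Fin (n + 1)) //
          P (Equiv.Perm.decomposeFin.symm (p, τ))} := by
    rw [← card_sigma']
    apply Nat.card_congr
    exact Equiv.subtypeProdEquivSigmaSubtype (fun p τ => P (Equiv.Perm.decomposeFin.symm (p, τ)))
  rw [h1, h2, Fin.sum_univ_succ]
  congr 1
  · -- the p = 0 term
    have hiff : ∀ τ : Perm (Fin (n + 1)),
        P (Equiv.Perm.decomposeFin.symm ((0 : Fin (n + 2)), τ)) ↔
          (C 1 ∧ ∀ x, ¬ q ∣ Function.minimalPeriod ⇑τ x) := by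
      intro τ
      rw [hP]
      simp only
      rw [d0_per_zero]
      apply and_congr_right'
      constructor
      · intro h x
        have := h x.succ (d0_not_sameCycle τ x)
        rwa [d0_per_succ] at this
      · intro h y hy
        rcases Fin.eq_zero_or_eq_succ y with rfl | ⟨x, rfl⟩
        · exact absurd (Equiv.Perm.SameCycle.refl _ _) hy
        · rw [d0_per_succ]
          exact h x
    by_cases hC : C 1
    · rw [if_pos hC]
      apply Nat.card_congr
      refine Equiv.subtypeEquiv (Equiv.refl _) (fun τ => ?_)
      simp only [Equiv.refl_apply]
      rw [hiff τ]
      simp [hC]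
    · rw [if_neg hC]
      have : IsEmpty {τ : Perm (Fin (n + 1)) //
          P (Equiv.Perm.decomposeFin.symm ((0 : Fin (n + 2)), τ))} := by
        refine ⟨fun t => hC ?_⟩
        exact ((hiff t.1).mp t.2).1
      exact Nat.card_of_isEmpty
  · -- the p = succ p' terms
    have hterm : ∀ p' : Fin (n + 1),
        Nat.card {τ : Perm (Fin (n + 1)) // P (Equiv.Perm.decomposeFin.symm (p'.succ, τ))} =
          MC q (fun ℓ => C (ℓ + 1)) (0 : Fin (n + 1)) := by
      intro p'
      have hiff : ∀ τ : Perm (Fin (n + 1)),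
          P (Equiv.Perm.decomposeFin.symm (p'.succ, τ)) ↔
            (C (Function.minimalPeriod ⇑τ p' + 1) ∧
              ∀ x, ¬ τ.SameCycle p' x → ¬ q ∣ Function.minimalPeriod ⇑τ x) := by
        intro τ
        rw [hP]
        simp only
        rw [ds_per_zero]
        apply and_congr_right'
        constructor
        · intro h x hx
          have := h x.succ (fun hc => hx ((ds_sameCycle τ p' x).mp hc))
          rwa [ds_per_succ τ p' hx] at this
        · intro h y hy
          rcases Fin.eq_zero_or_eq_succ y with rfl | ⟨x, rfl⟩
          · exact absurd (Equiv.Perm.SameCycle.refl _ _) hy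
          · have hx : ¬ τ.SameCycle p' x := fun hc => hy ((ds_sameCycle τ p' x).mpr hc)
            rw [ds_per_succ τ p' hx]
            exact h x hx
      have e1 : Nat.card {τ : Perm (Fin (n + 1)) //
          P (Equiv.Perm.decomposeFin.symm (p'.succ, τ))} = MC q (fun ℓ => C (ℓ + 1)) p' := by
        apply Nat.card_congr
        exact Equiv.subtypeEquiv (Equiv.refl _) (fun τ => by
          simpa only [Equiv.refl_apply] using hiff τ)
      rw [e1, MC_marked]
    rw [Finset.sum_congr rfl (fun p' _ => hterm p'), Finset.sum_const, Finset.card_univ,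
      Fintype.card_fin, smul_eq_mul]

lemma MC_one {q : ℕ} (C : ℕ → Prop) : MC q C (0 : Fin 1) = if C 1 then 1 else 0 := by
  classical
  have huniq : ∀ σ : Perm (Fin 1), σ = 1 := fun σ => Equiv.ext fun x => Subsingleton.elim _ _
  have hper : ∀ σ : Perm (Fin 1), Function.minimalPeriod ⇑σ 0 = 1 := by
    intro σ
    rw [huniq σ]
    exact Function.minimalPeriod_eq_one_iff_isFixedPt.mpr rfl
  by_cases hC : C 1
  · rw [if_pos hC]
    have : Nonempty {σ : Perm (Fin 1) // C (Function.minimalPeriod ⇑σ 0) ∧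
        ∀ x, ¬ σ.SameCycle 0 x → ¬ q ∣ Function.minimalPeriod ⇑σ x} := by
      refine ⟨⟨1, ?_, ?_⟩⟩
      · rw [hper]; exact hC
      · intro x hx
        exact absurd (Subsingleton.elim (0 : Fin 1) x ▸ Equiv.Perm.SameCycle.refl _ _) hx
    have hsub : Subsingleton {σ : Perm (Fin 1) // C (Function.minimalPeriod ⇑σ 0) ∧
        ∀ x, ¬ σ.SameCycle 0 x → ¬ q ∣ Function.minimalPeriod ⇑σ x} :=
      ⟨fun a b => Subtype.ext (by rw [huniq a.1, huniq b.1])⟩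
    exact Nat.card_unique
  · rw [if_neg hC]
    have : IsEmpty {σ : Perm (Fin 1) // C (Function.minimalPeriod ⇑σ 0) ∧
        ∀ x, ¬ σ.SameCycle 0 x → ¬ q ∣ Function.minimalPeriod ⇑σ x} := by
      refine ⟨fun t => hC ?_⟩
      have := t.2.1
      rwa [hper] at this
    exact Nat.card_of_isEmpty

lemma Ag_zero (q : ℕ) : Ag q 0 = 1 := by
  have huniq : ∀ σ : Perm (Fin 0), σ = 1 := fun σ => Equiv.ext fun x => x.elim0
  have : Nonempty {σ : Perm (Fin 0) // ∀ x, ¬ q ∣ Function.minimalPeriod ⇑σ x} :=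
    ⟨⟨1, fun x => x.elim0⟩⟩
  have hsub : Subsingleton {σ : Perm (Fin 0) // ∀ x, ¬ q ∣ Function.minimalPeriod ⇑σ x} :=
    ⟨fun a b => Subtype.ext (by rw [huniq a.1, huniq b.1])⟩
  exact Nat.card_unique

lemma Ag_one {q : ℕ} (hq : 2 ≤ q) : Ag q 1 = 1 := by
  have huniq : ∀ σ : Perm (Fin 1), σ = 1 := fun σ => Equiv.ext fun x => Subsingleton.elim _ _
  have hgood : ∀ (σ : Perm (Fin 1)) (x : Fin 1), ¬ q ∣ Function.minimalPeriod ⇑σ x := by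
    intro σ x
    have h1 : Function.minimalPeriod ⇑σ x = 1 := by
      rw [huniq σ]
      exact Function.minimalPeriod_eq_one_iff_isFixedPt.mpr rfl
    rw [h1]
    intro hdvd
    have := Nat.le_of_dvd one_pos hdvd
    omega
  have : Nonempty {σ : Perm (Fin 1) // ∀ x, ¬ q ∣ Function.minimalPeriod ⇑σ x} :=
    ⟨⟨1, hgood 1⟩⟩
  have hsub : Subsingleton {σ : Perm (Fin 1) // ∀ x, ¬ q ∣ Function.minimalPeriod ⇑σ x} :=
    ⟨fun a b => Subtype.ext (by rw [huniq a.1, huniq b.1])⟩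
  exact Nat.card_unique


/-- the count with marked residue -/
noncomputable def Eg (q r n : ℕ) : ℕ := MC q (fun ℓ => ℓ % q = r) (0 : Fin (n + 1))

lemma mod_aux {q r : ℕ} (hq : 2 ≤ q) (hr : r < q) (ℓ : ℕ) :
    (ℓ + 1) % q = r ↔ ℓ % q = (r + q - 1) % q := by
  have ha : ℓ % q < q := Nat.mod_lt _ (by omega)
  have h1 : (ℓ + 1) % q = (ℓ % q + 1) % q := by
    conv_lhs => rw [Nat.add_mod, Nat.mod_eq_of_lt (show 1 < q by omega)]
  have h2 : (r + q - 1) % q = if r = 0 then q - 1 else r - 1 := by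
    rcases Nat.eq_zero_or_pos r with rfl | hrp
    · rw [if_pos rfl]
      simp only [Nat.zero_add]
      exact Nat.mod_eq_of_lt (by omega)
    · rw [if_neg (by omega)]
      have he : r + q - 1 = (r - 1) + q := by omega
      rw [he, Nat.add_mod_right, Nat.mod_eq_of_lt (by omega)]
  have h3 : (ℓ % q + 1) % q = if ℓ % q + 1 = q then 0 else ℓ % q + 1 := by
    by_cases h : ℓ % q + 1 = q
    · rw [if_pos h, h, Nat.mod_self]
    · rw [if_neg h, Nat.mod_eq_of_lt (by omega)]
  rw [h1, h2, h3]
  split_ifs <;> omega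

lemma mod_eq_qsub1_iff {q : ℕ} (hq : 2 ≤ q) (ℓ : ℕ) : ℓ % q = q - 1 ↔ q ∣ (ℓ + 1) := by
  constructor
  · intro h
    have := Nat.div_add_mod ℓ q
    exact ⟨ℓ / q + 1, by rw [Nat.mul_add, Nat.mul_one]; omega⟩
  · rintro ⟨k, hk⟩
    have hk1 : 1 ≤ k := by
      rcases Nat.eq_zero_or_pos k with rfl | h
      · omega
      · exact h
    obtain ⟨t, rfl⟩ := Nat.exists_eq_add_of_le hk1
    have hℓ : ℓ = q * t + (q - 1) := by
      rw [Nat.mul_add, Nat.mul_one] at hk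
      omega
    rw [hℓ, Nat.mul_add_mod, Nat.mod_eq_of_lt (by omega)]


lemma MC_split (q : ℕ) (C : ℕ → Prop) {m : ℕ} (z : Fin m) :
    MC q C z + MC q (fun ℓ => ¬ C ℓ) z = MC q (fun _ => True) z := by
  have h := card_split (P := fun σ : Perm (Fin m) => C (Function.minimalPeriod ⇑σ z))
    (R := fun σ : Perm (Fin m) => ∀ x, ¬ σ.SameCycle z x → ¬ q ∣ Function.minimalPeriod ⇑σ x)
  have htop : MC q (fun _ => True) z =
      Nat.card {σ : Perm (Fin m) // ∀ x, ¬ σ.SameCycle z x →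
        ¬ q ∣ Function.minimalPeriod ⇑σ x} := by
    apply Nat.card_congr
    exact Equiv.subtypeEquiv (Equiv.refl _) (fun σ => by simp)
  rw [htop, h]
  rfl

lemma Eg_formula {q : ℕ} (hq : 2 ≤ q) :
    ∀ n r, r < q → Eg q r n =
      ∑ k ∈ Finset.range (n + 1),
        (if (k + 1) % q = r then n.descFactorial k * Ag q (n - k) else 0) := by
  intro n
  induction n with
  | zero =>
    intro r hr
    rw [Eg, MC_one]
    rw [Finset.sum_range_one]
    by_cases h : 1 % q = r
    · simp only [Nat.zero_add] at *
      rw [if_pos h, if_pos h, Nat.descFactorial_zero, Ag_zero]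
    · simp only [Nat.zero_add] at *
      rw [if_neg h, if_neg h]
  | succ n ih =>
    intro r hr
    have hr' : (r + q - 1) % q < q := Nat.mod_lt _ (by omega)
    rw [Eg, MC_rec]
    have hcongr : MC q (fun ℓ => (ℓ + 1) % q = r) (0 : Fin (n + 1)) = Eg q ((r + q - 1) % q) n :=
      MC_congr _ (fun ℓ => mod_aux hq hr ℓ)
    rw [hcongr, ih _ hr', Finset.mul_sum]
    have hstep : ∀ k,
        (n + 1) * (if (k + 1) % q = (r + q - 1) % q then n.descFactorial k * Ag q (n - k) else 0)
          = (if (k + 1 + 1) % q = r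
              then (n + 1).descFactorial (k + 1) * Ag q (n + 1 - (k + 1)) else 0) := by
      intro k
      have hiff : (k + 1 + 1) % q = r ↔ (k + 1) % q = (r + q - 1) % q := mod_aux hq hr (k + 1)
      by_cases h : (k + 1) % q = (r + q - 1) % q
      · rw [if_pos h, if_pos (hiff.mpr h), Nat.succ_descFactorial_succ]
        have he : n + 1 - (k + 1) = n - k := by omega
        rw [he, Nat.mul_assoc]
      · rw [if_neg h, if_neg (fun hc => h (hiff.mp hc)), Nat.mul_zero]
    rw [Finset.sum_congr rfl (fun k _ => hstep k)]
    conv_rhs => rw [Finset.sum_range_succ']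
    simp only [Nat.zero_add, Nat.sub_zero, Nat.descFactorial_zero, Nat.one_mul]
    by_cases h : 1 % q = r <;> simp [h, Nat.add_comm]

lemma not_q_dvd_one {q : ℕ} (hq : 2 ≤ q) : ¬ q ∣ 1 := by
  intro h
  have := Nat.le_of_dvd one_pos h
  omega

lemma Ag_succ {q : ℕ} (hq : 2 ≤ q) : ∀ n, ¬ q ∣ (n + 1) → Ag q (n + 1) = (n + 1) * Ag q n := by
  intro n
  induction n using Nat.strong_induction_on with
  | _ n IH =>
    match n with
    | 0 => intro _; rw [Ag_one hq, Ag_zero, Nat.mul_one]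
    | (n + 1) =>
      intro hdvd
      have hdvd' : ¬ q ∣ (n + 2) := hdvd
      -- key cancellation
      have hkey : Eg q 0 n = Eg q (q - 1) n := by
        rw [Eg_formula hq n 0 (by omega), Eg_formula hq n (q - 1) (by omega)]
        have hLc : ∀ k : ℕ, (if (k + 1) % q = 0 then n.descFactorial k * Ag q (n - k) else 0)
            = (if q ∣ (k + 1) then n.descFactorial k * Ag q (n - k) else 0) := by
          intro k
          congr 1
          rw [eq_iff_iff]
          exact Nat.dvd_iff_mod_eq_zero.symm
        have hRc : ∀ k : ℕ, (if (k + 1) % q = q - 1 then n.descFactorial k * Ag q (n - k) else 0)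
            = (if q ∣ (k + 2) then n.descFactorial k * Ag q (n - k) else 0) := by
          intro k
          congr 1
          rw [eq_iff_iff]
          exact mod_eq_qsub1_iff hq (k + 1)
        rw [Finset.sum_congr rfl (fun k _ => hLc k), Finset.sum_congr rfl (fun k _ => hRc k)]
        rw [Finset.sum_range_succ', Finset.sum_range_succ]
        rw [if_neg (not_q_dvd_one hq), if_neg (show ¬ q ∣ (n + 2) from hdvd')]
        rw [Nat.add_zero, Nat.add_zero]
        apply Finset.sum_congr rfl
        intro k hk
        have hkn : k < n := Finset.mem_range.mp hk
        by_cases h : q ∣ (k + 1 + 1)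
        · rw [if_pos h, if_pos h]
          have hnk : ¬ q ∣ (n - k) := by
            intro hc
            apply hdvd'
            have : (n - k) + (k + 2) = n + 2 := by omega
            rw [← this]
            exact Nat.dvd_add hc h
          have h1 : n - k = (n - k - 1) + 1 := by omega
          have h2 : Ag q (n - k) = (n - k) * Ag q (n - k - 1) := by
            rw [h1]
            rw [IH (n - k - 1) (by omega) (by rw [← h1]; exact hnk)]
            rw [← h1]
          rw [Nat.descFactorial_succ, h2]
          have he : n - (k + 1) = n - k - 1 := by omega
          rw [he]
          ring
        · rw [if_neg h, if_neg h]
      -- assemble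
      have hA2 : Ag q (n + 2) =
          Ag q (n + 1) + (n + 1) * MC q (fun ℓ => ¬ q ∣ (ℓ + 1)) (0 : Fin (n + 1)) := by
        rw [Ag_eq_MC q (n + 1), MC_rec, if_pos (not_q_dvd_one hq)]
      have hE0 : Eg q 0 n = MC q (fun ℓ => q ∣ ℓ) (0 : Fin (n + 1)) :=
        MC_congr _ (fun ℓ => Nat.dvd_iff_mod_eq_zero.symm)
      have hE1 : Eg q (q - 1) n = MC q (fun ℓ => q ∣ (ℓ + 1)) (0 : Fin (n + 1)) :=
        MC_congr _ (fun ℓ => mod_eq_qsub1_iff hq ℓ)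
      have hs1 : MC q (fun ℓ => q ∣ ℓ) (0 : Fin (n + 1)) +
          MC q (fun ℓ => ¬ q ∣ ℓ) (0 : Fin (n + 1)) = MC q (fun _ => True) (0 : Fin (n + 1)) :=
        MC_split q _ _
      have hs2 : MC q (fun ℓ => q ∣ (ℓ + 1)) (0 : Fin (n + 1)) +
          MC q (fun ℓ => ¬ q ∣ (ℓ + 1)) (0 : Fin (n + 1)) =
            MC q (fun _ => True) (0 : Fin (n + 1)) :=
        MC_split q _ _
      have hAg : Ag q (n + 1) = MC q (fun ℓ => ¬ q ∣ ℓ) (0 : Fin (n + 1)) := Ag_eq_MC q n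
      have hG : MC q (fun ℓ => ¬ q ∣ (ℓ + 1)) (0 : Fin (n + 1)) = Ag q (n + 1) := by
        omega
      rw [hA2, hG]
      ring



lemma prop_eq {q : ℕ} (n : ℕ) :
    propNoCycleMul q n = (NCAux.Ag q n : ℚ) / (n.factorial : ℚ) := by
  have h : {σ : Equiv.Perm (Fin n) | NoCycleLenMulOf q σ}.ncard = NCAux.Ag q n := by
    rw [← Nat.card_coe_set_eq]
    rfl
  rw [propNoCycleMul, h]

lemma prop_step {q : ℕ} (hq : 2 ≤ q) {n : ℕ} (h : ¬ q ∣ (n + 1)) :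
    propNoCycleMul q (n + 1) = propNoCycleMul q n := by
  rw [prop_eq, prop_eq, NCAux.Ag_succ hq n h, Nat.factorial_succ]
  push_cast
  rw [mul_div_mul_left]
  have : (0 : ℚ) < (n : ℚ) + 1 := by positivity
  exact ne_of_gt this

end NCAux

theorem stmt_2 (q m : ℕ) (hq : 2 ≤ q) (hm : 1 ≤ m) :
    ∀ n, m * q ≤ n → n ≤ m * q + q - 1 → propNoCycleMul q n = propNoCycleMul q (m * q) := by
  have aux : ∀ j, j ≤ q - 1 → propNoCycleMul q (m * q + j) = propNoCycleMul q (m * q) := by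
    intro j
    induction j with
    | zero => intro _; rfl
    | succ j ih =>
      intro hj
      have hstep : ¬ q ∣ (m * q + j + 1) := by
        intro hc
        have h1 : q ∣ m * q := dvd_mul_left q m
        have h2 : q ∣ (j + 1) := by
          rw [Nat.add_assoc] at hc
          exact (Nat.dvd_add_right h1).mp hc
        have := Nat.le_of_dvd (Nat.succ_pos j) h2
        omega
      have he : m * q + (j + 1) = (m * q + j) + 1 := by omega
      rw [he, NCAux.prop_step hq hstep, ih (by omega)]
  intro n h1 h2
  obtain ⟨j, rfl⟩ : ∃ j, n = m * q + j := ⟨n - m * q, by omega⟩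
  exact aux j (by omega)
end

section
/- For integers q, n, k with 1 ≤ k < n, the number of elements of the coset C_{n,k} with no cycle of length divisible by q satisfies the recurrence: N̄(C_{n,k}) = [q ∤ k]·N̄(S_{n-k}) + (n-k)·N̄(C_{n,k+1}), where [q ∤ k] is 1 if q does not divide k and 0 otherwise. -/
open Equiv Function List

/-- The coset `C_{n,k} = G_{n,k-1}·(1,2,…,k)` where `G_{n,k-1}` is the pointwise
stabilizer of the first `k-1` points of `{1,…,n}` (here `Fin n`, points `0,…,k-2`). -/
def cosetC (n k : ℕ) : Set (Equiv.Perm (Fin n)) :=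
  {σ | ∃ g : Equiv.Perm (Fin n), (∀ i : Fin n, (i : ℕ) < k - 1 → g i = i) ∧
    σ = g * ((List.finRange n).take k).formPerm}

section Cyc
variable {n k : ℕ}

/-- the basic cycle -/
private def cyc (n k : ℕ) : Equiv.Perm (Fin n) := ((List.finRange n).take k).formPerm

private lemma take_finRange_nodup : ((List.finRange n).take k).Nodup :=
  (List.nodup_finRange n).sublist (List.take_sublist _ _)

private lemma take_finRange_length (h : k ≤ n) : ((List.finRange n).take k).length = k := by
  simp [h]

private lemma take_finRange_getElem (h : k ≤ n) (i : ℕ) (hi : i < k) :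
    ((List.finRange n).take k)[i]'(by simp; omega) = ⟨i, lt_of_lt_of_le hi h⟩ := by
  simp [List.getElem_take]

private lemma cyc_apply_lt (h : k ≤ n) (x : Fin n) (hx : (x : ℕ) < k) :
    cyc n k x = ⟨((x : ℕ) + 1) % k, lt_of_lt_of_le (Nat.mod_lt _ (by omega)) h⟩ := by
  have hx' : (x : ℕ) < ((List.finRange n).take k).length := by rw [take_finRange_length h]; exact hx
  have : x = ((List.finRange n).take k)[(x : ℕ)] := by
    rw [take_finRange_getElem h _ hx]
  conv_lhs => rw [this]
  rw [cyc, List.formPerm_apply_getElem _ take_finRange_nodup _ hx']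
  simp only [take_finRange_length h]
  rw [take_finRange_getElem h _ (Nat.mod_lt _ (by omega))]

private lemma cyc_apply_ge (x : Fin n) (hx : k ≤ (x : ℕ)) : cyc n k x = x := by
  apply List.formPerm_apply_of_notMem
  intro hmem
  obtain ⟨i, hi, hx'⟩ := List.getElem_of_mem hmem
  have hik : i < k ∧ i < n := by simpa using hi
  rw [take_finRange_getElem (by omega) i hik.1] at hx'
  rw [← hx'] at hx
  simp at hx; omega

end Cyc

section Periods
variable {m₁ m₂ : ℕ}

private lemma minPeriod_eq_of_iff {σ : Equiv.Perm (Fin m₁)} {τ : Equiv.Perm (Fin m₂)}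
    {x : Fin m₁} {y : Fin m₂} (h : ∀ m : ℕ, (σ ^ m) x = x ↔ (τ ^ m) y = y) :
    Function.minimalPeriod σ x = Function.minimalPeriod τ y := by
  have key : ∀ m : ℕ, Function.IsPeriodicPt σ m x ↔ Function.IsPeriodicPt τ m y := by
    intro m
    simp only [Function.IsPeriodicPt, Function.IsFixedPt, ← Equiv.Perm.coe_pow]
    exact h m
  apply Nat.dvd_antisymm
  · exact Function.IsPeriodicPt.minimalPeriod_dvd
      ((key _).2 (Function.isPeriodicPt_minimalPeriod τ y))
  · exact Function.IsPeriodicPt.minimalPeriod_dvd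
      ((key _).1 (Function.isPeriodicPt_minimalPeriod σ x))

private lemma minPeriod_conj (π σ : Equiv.Perm (Fin m₁)) (x : Fin m₁) :
    Function.minimalPeriod ⇑(π * σ * π⁻¹) (π x) = Function.minimalPeriod ⇑σ x := by
  apply minPeriod_eq_of_iff
  intro m
  have : (π * σ * π⁻¹) ^ m = π * σ ^ m * π⁻¹ := by
    rw [conj_pow]
  rw [this]
  simp [Equiv.Perm.mul_apply]

private lemma good_conj (q : ℕ) (π σ : Equiv.Perm (Fin m₁)) :
    NoCycleLenMulOf q (π * σ * π⁻¹) ↔ NoCycleLenMulOf q σ := by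
  constructor
  · intro h x
    have := h (π x)
    rwa [minPeriod_conj] at this
  · intro h x
    have := h (π⁻¹ x)
    rw [← minPeriod_conj π σ (π⁻¹ x)] at this
    simpa using this

end Periods

section CycPow
variable {n k : ℕ}

private lemma cyc_pow (h : k ≤ n) (hk : 1 ≤ k) (m : ℕ) (x : Fin n) (hx : (x : ℕ) < k) :
    ((cyc n k) ^ m) x = ⟨((x : ℕ) + m) % k, lt_of_lt_of_le (Nat.mod_lt _ (by omega)) h⟩ := by
  induction m with
  | zero => simp [Nat.mod_eq_of_lt hx]
  | succ m ih =>
    rw [pow_succ', Equiv.Perm.mul_apply, ih]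
    rw [cyc_apply_lt h _ (Nat.mod_lt _ (by omega))]
    simp only [Fin.mk.injEq]
    rw [Nat.mod_add_mod]
    ring_nf

private lemma cyc_minimalPeriod (h : k ≤ n) (hk : 1 ≤ k) (x : Fin n) (hx : (x : ℕ) < k) :
    Function.minimalPeriod (cyc n k) x = k := by
  have hper : Function.IsPeriodicPt (cyc n k) k x := by
    have : ((cyc n k) ^ k) x = x := by
      rw [cyc_pow h hk k x hx]
      apply Fin.ext
      simp [Nat.add_mod, Nat.mod_eq_of_lt hx]
    simpa [Function.IsPeriodicPt, Function.IsFixedPt, ← Equiv.Perm.coe_pow] using this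
  have hpos : 0 < Function.minimalPeriod (cyc n k) x :=
    Function.IsPeriodicPt.minimalPeriod_pos (by omega) hper
  have hdvd1 : Function.minimalPeriod (cyc n k) x ∣ k := hper.minimalPeriod_dvd
  have hper2 := Function.isPeriodicPt_minimalPeriod (cyc n k) x
  simp only [Function.IsPeriodicPt, Function.IsFixedPt, ← Equiv.Perm.coe_pow] at hper2
  rw [cyc_pow h hk _ x hx] at hper2
  have : ((x : ℕ) + Function.minimalPeriod (cyc n k) x) % k = (x : ℕ) := by
    simpa using congrArg Fin.val hper2
  have hdvd2 : k ∣ Function.minimalPeriod (cyc n k) x := by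
    have h1 : ((x : ℕ) + Function.minimalPeriod (cyc n k) x) % k = (x : ℕ) % k := by
      rw [this, Nat.mod_eq_of_lt hx]
    have := (Nat.modEq_iff_dvd' (by omega : (x:ℕ) ≤ (x:ℕ) + Function.minimalPeriod (cyc n k) x)).1
      h1.symm
    simpa using this
  exact Nat.dvd_antisymm hdvd1 hdvd2

private lemma cyc_inv_apply (h : k ≤ n) (hk : 1 ≤ k) (i : Fin n) (hi : (i : ℕ) < k) :
    (cyc n k)⁻¹ i = ⟨((i : ℕ) + (k - 1)) % k, lt_of_lt_of_le (Nat.mod_lt _ (by omega)) h⟩ := by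
  rw [Equiv.Perm.inv_eq_iff_eq]
  rw [cyc_apply_lt h _ (Nat.mod_lt _ (by omega))]
  apply Fin.ext
  simp only [Nat.mod_add_mod]
  have : (i : ℕ) + (k - 1) + 1 = (i : ℕ) + k := by omega
  rw [this, Nat.add_mod_right, Nat.mod_eq_of_lt hi]

end CycPow

section MemC
variable {n k : ℕ}

private lemma mem_cosetC_iff (σ : Equiv.Perm (Fin n)) :
    σ ∈ cosetC n k ↔ ∀ i : Fin n, (i : ℕ) < k - 1 → σ ((cyc n k)⁻¹ i) = i := by
  constructor
  · rintro ⟨g, hg, rfl⟩ i hi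
    show (g * cyc n k) _ = i
    rw [Equiv.Perm.mul_apply, Equiv.Perm.inv_def, Equiv.apply_symm_apply]
    exact hg i hi
  · intro h
    refine ⟨σ * (cyc n k)⁻¹, fun i hi => ?_, (inv_mul_cancel_right σ _).symm⟩
    exact h i hi

private lemma memC_iff (hk : 1 ≤ k) (hkn : k ≤ n) (σ : Equiv.Perm (Fin n)) :
    σ ∈ cosetC n k ↔
      (∀ (i : Fin n) (_hi : (i : ℕ) + 3 ≤ k), σ i = ⟨(i : ℕ) + 1, by omega⟩) ∧
      (∀ _hk2 : 2 ≤ k, σ ⟨k - 1, by omega⟩ = ⟨0, by omega⟩) := by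
  rw [mem_cosetC_iff]
  constructor
  · intro H
    constructor
    · intro i hi
      have h1 : ((⟨(i : ℕ) + 1, by omega⟩ : Fin n) : ℕ) < k - 1 := by simp; omega
      have := H ⟨(i : ℕ) + 1, by omega⟩ h1
      rw [cyc_inv_apply hkn hk _ (by simp; omega)] at this
      have harith : ((i : ℕ) + 1 + (k - 1)) % k = (i : ℕ) := by
        have : (i : ℕ) + 1 + (k - 1) = (i : ℕ) + k := by omega
        rw [this, Nat.add_mod_right, Nat.mod_eq_of_lt (by omega)]
      simp only [harith] at this
      rw [show (⟨(i : ℕ), by omega⟩ : Fin n) = i from Fin.ext rfl] at this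
      exact this
    · intro h2
      have h1 : ((⟨0, by omega⟩ : Fin n) : ℕ) < k - 1 := by simp; omega
      have := H ⟨0, by omega⟩ h1
      rw [cyc_inv_apply hkn hk _ (by simp; omega)] at this
      have harith : (0 + (k - 1)) % k = k - 1 := by
        rw [Nat.zero_add, Nat.mod_eq_of_lt (by omega)]
      simp only [harith] at this
      exact this
  · rintro ⟨h1, h2⟩ i hi
    rw [cyc_inv_apply hkn hk _ (by omega)]
    rcases Nat.eq_zero_or_pos (i : ℕ) with h0 | hpos
    · have harith : ((i : ℕ) + (k - 1)) % k = k - 1 := by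
        rw [h0, Nat.zero_add, Nat.mod_eq_of_lt (by omega)]
      simp only [harith]
      rw [h2 (by omega)]
      exact Fin.ext h0.symm
    · have harith : ((i : ℕ) + (k - 1)) % k = (i : ℕ) - 1 := by
        have : (i : ℕ) + (k - 1) = ((i : ℕ) - 1) + k := by omega
        rw [this, Nat.add_mod_right, Nat.mod_eq_of_lt (by omega)]
      simp only [harith]
      rw [h1 ⟨(i : ℕ) - 1, by omega⟩ (by simp; omega)]
      exact Fin.ext (by simp; omega)

private lemma cyc_inv_km1 (hk : 1 ≤ k) (hkn : k ≤ n) :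
    (cyc n k)⁻¹ ⟨k - 1, by omega⟩ = ⟨k - 2, by omega⟩ := by
  rw [cyc_inv_apply hkn hk _ (by simp; omega)]
  apply Fin.ext
  simp only
  rcases Nat.lt_or_ge k 2 with h | h
  · interval_cases k
    · simp
  · have : k - 1 + (k - 1) = (k - 2) + k := by omega
    rw [this, Nat.add_mod_right, Nat.mod_eq_of_lt (by omega)]

end MemC

section Claim1
variable {n k : ℕ}

private lemma val_restrict (hk : 1 ≤ k) (hkn : k < n) (σ : Equiv.Perm (Fin n))
    (hσ : σ ∈ cosetC n k) :
    σ ⟨k - 2, by omega⟩ = ⟨k - 1, by omega⟩ ∨ k ≤ ((σ ⟨k - 2, by omega⟩ : Fin n) : ℕ) := by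
  obtain ⟨h1, h2⟩ := (memC_iff hk (by omega) σ).1 hσ
  generalize hveq : σ ⟨k - 2, by omega⟩ = v
  by_contra hcon
  push_neg at hcon
  obtain ⟨hne, hlt⟩ := hcon
  rcases Nat.lt_or_ge k 2 with hk1 | hk2
  · exact hne (Fin.ext (by simp; omega))
  · rcases Nat.lt_or_ge (v : ℕ) (k - 1) with hvlt | hvge
    · rcases Nat.eq_zero_or_pos (v : ℕ) with h0 | hpos
      · have hsv : σ ⟨k - 1, by omega⟩ = v := by
          rw [h2 hk2]; exact Fin.ext (by simp; omega)
        have := σ.injective (hsv.trans hveq.symm)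
        simp only [Fin.mk.injEq] at this
        omega
      · have hm3 : ((⟨(v : ℕ) - 1, by omega⟩ : Fin n) : ℕ) + 3 ≤ k := by simp; omega
        have hs := h1 ⟨(v : ℕ) - 1, by omega⟩ hm3
        have hsv : σ ⟨(v : ℕ) - 1, by omega⟩ = v := by
          rw [hs]; exact Fin.ext (by simp; omega)
        have := σ.injective (hsv.trans hveq.symm)
        simp only [Fin.mk.injEq] at this
        omega
    · exact hne (Fin.ext (by simp; omega))

private def emb (n k : ℕ) : Fin (n - k) ≃ {x : Fin n // k ≤ (x : ℕ)} where
  toFun i := ⟨⟨k + (i : ℕ), by have := i.isLt; omega⟩, by simp⟩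
  invFun x := ⟨((x : Fin n) : ℕ) - k, by have := (x : Fin n).isLt; have := x.2; omega⟩
  left_inv i := by ext; simp
  right_inv x := by ext; have := x.2; simp; omega

private def phi (n k : ℕ) (τ : Equiv.Perm (Fin (n - k))) : Equiv.Perm (Fin n) :=
  (τ.extendDomain (emb n k)) * cyc n k

private lemma phi_apply_lt (τ : Equiv.Perm (Fin (n - k))) (hkn : k ≤ n) (hk : 1 ≤ k)
    (x : Fin n) (hx : (x : ℕ) < k) : phi n k τ x = cyc n k x := by
  rw [phi, Equiv.Perm.mul_apply]
  apply Equiv.Perm.extendDomain_apply_not_subtype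
  rw [cyc_apply_lt hkn x hx]
  simp only [not_le]
  exact Nat.mod_lt _ (by omega)

private lemma phi_iter_lt (τ : Equiv.Perm (Fin (n - k))) (hkn : k ≤ n) (hk : 1 ≤ k)
    (m : ℕ) (x : Fin n) (hx : (x : ℕ) < k) : ((phi n k τ) ^ m) x = ((cyc n k) ^ m) x := by
  induction m with
  | zero => simp
  | succ m ih =>
    rw [pow_succ', pow_succ', Equiv.Perm.mul_apply, Equiv.Perm.mul_apply, ih]
    have hcm : (((cyc n k ^ m) x : Fin n) : ℕ) < k := by
      rw [cyc_pow hkn hk m x hx]; exact Nat.mod_lt _ (by omega)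
    exact phi_apply_lt τ hkn hk _ hcm

private lemma phi_minP_lt (τ : Equiv.Perm (Fin (n - k))) (hkn : k ≤ n) (hk : 1 ≤ k)
    (x : Fin n) (hx : (x : ℕ) < k) :
    Function.minimalPeriod (phi n k τ) x = k := by
  have : Function.minimalPeriod (phi n k τ) x = Function.minimalPeriod (cyc n k) x :=
    minPeriod_eq_of_iff (fun m => by rw [phi_iter_lt τ hkn hk m x hx])
  rw [this, cyc_minimalPeriod hkn hk x hx]

private lemma phi_apply_emb (τ : Equiv.Perm (Fin (n - k))) (i : Fin (n - k)) :
    phi n k τ ((emb n k i : Fin n)) = (emb n k (τ i) : Fin n) := by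
  rw [phi, Equiv.Perm.mul_apply, cyc_apply_ge _ (emb n k i).2]
  exact Equiv.Perm.extendDomain_apply_image τ (emb n k) i

private lemma phi_iter_emb (τ : Equiv.Perm (Fin (n - k))) (m : ℕ) (i : Fin (n - k)) :
    ((phi n k τ) ^ m) ((emb n k i : Fin n)) = (emb n k ((τ ^ m) i) : Fin n) := by
  induction m with
  | zero => simp
  | succ m ih => rw [pow_succ', pow_succ', Equiv.Perm.mul_apply, Equiv.Perm.mul_apply, ih,
      phi_apply_emb]

private lemma phi_minP_emb (τ : Equiv.Perm (Fin (n - k))) (i : Fin (n - k)) :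
    Function.minimalPeriod (phi n k τ) ((emb n k i : Fin n)) = Function.minimalPeriod τ i := by
  apply minPeriod_eq_of_iff
  intro m
  rw [phi_iter_emb]
  constructor
  · intro h
    exact (emb n k).injective (Subtype.ext h)
  · intro h
    rw [h]

private lemma good_phi (q : ℕ) (τ : Equiv.Perm (Fin (n - k))) (hkn : k < n) (hk : 1 ≤ k) :
    NoCycleLenMulOf q (phi n k τ) ↔ (¬ q ∣ k ∧ NoCycleLenMulOf q τ) := by
  constructor
  · intro h
    constructor
    · have := h ⟨0, by omega⟩
      rwa [phi_minP_lt τ (by omega) hk _ (by simp; omega)] at this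
    · intro i
      have := h ((emb n k i : Fin n))
      rwa [phi_minP_emb] at this
  · rintro ⟨hq, hτ⟩ x
    rcases Nat.lt_or_ge (x : ℕ) k with hx | hx
    · rw [phi_minP_lt τ (by omega) hk x hx]
      exact hq
    · have hxe : x = (emb n k ⟨(x : ℕ) - k, by have := x.isLt; omega⟩ : Fin n) := by
        apply Fin.ext
        show (x : ℕ) = k + ((x : ℕ) - k)
        omega
      rw [hxe, phi_minP_emb]
      exact hτ _

private lemma phi_mem (τ : Equiv.Perm (Fin (n - k))) (hk : 1 ≤ k) (hkn : k < n) :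
    phi n k τ ∈ cosetC n k ∧ phi n k τ ⟨k - 2, by omega⟩ = ⟨k - 1, by omega⟩ := by
  constructor
  · rw [mem_cosetC_iff]
    intro i hi
    rw [phi, Equiv.Perm.mul_apply, Equiv.Perm.inv_def, Equiv.apply_symm_apply]
    exact Equiv.Perm.extendDomain_apply_not_subtype _ _ (by simp; omega)
  · have h2 : ((⟨k - 2, by omega⟩ : Fin n) : ℕ) < k := by simp; omega
    rw [phi_apply_lt τ (by omega) hk ⟨k - 2, by omega⟩ h2,
      cyc_apply_lt (by omega) ⟨k - 2, by omega⟩ h2]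
    apply Fin.ext
    show (k - 2 + 1) % k = k - 1
    rcases Nat.lt_or_ge k 2 with h | h
    · interval_cases k
      · simp
    · rw [Nat.mod_eq_of_lt (by omega)]
      omega

private lemma phi_surj (σ : Equiv.Perm (Fin n)) (hk : 1 ≤ k) (hkn : k < n)
    (hσ : σ ∈ cosetC n k) (hval : σ ⟨k - 2, by omega⟩ = ⟨k - 1, by omega⟩) :
    ∃ τ : Equiv.Perm (Fin (n - k)), σ = phi n k τ := by
  have H := (mem_cosetC_iff σ).1 hσ
  set g := σ * (cyc n k)⁻¹ with hgdef
  have hg : ∀ x : Fin n, (x : ℕ) < k → g x = x := by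
    intro x hx
    rcases Nat.lt_or_ge (x : ℕ) (k - 1) with h | h
    · exact H x h
    · have hxeq : x = ⟨k - 1, by omega⟩ := Fin.ext (by simp; omega)
      rw [hxeq]
      show σ ((cyc n k)⁻¹ ⟨k - 1, by omega⟩) = _
      rw [cyc_inv_km1 hk (by omega), hval]
  have hp : ∀ x : Fin n, k ≤ (x : ℕ) ↔ k ≤ ((g x : Fin n) : ℕ) := by
    intro x
    constructor
    · intro hx
      by_contra hcon
      push_neg at hcon
      have h1 : g (g x) = g x := hg _ hcon
      have := g.injective h1
      rw [this] at hcon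
      omega
    · intro hx
      by_contra hcon
      push_neg at hcon
      rw [hg x hcon] at hx
      omega
  refine ⟨(emb n k).symm.permCongr (g.subtypePerm (fun x => (hp x).symm)), ?_⟩
  have hext : (((emb n k).symm.permCongr (g.subtypePerm (fun x => (hp x).symm))).extendDomain (emb n k)) = g := by
    apply Equiv.ext
    intro x
    by_cases hx : k ≤ (x : ℕ)
    · rw [Equiv.Perm.extendDomain_apply_subtype _ (emb n k) hx]
      simp [Equiv.permCongr_apply, Equiv.Perm.subtypePerm_apply]
    · rw [Equiv.Perm.extendDomain_apply_not_subtype _ (emb n k) hx, hg x (by omega)]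
  rw [phi, hext, hgdef, inv_mul_cancel_right]

section Claim2
variable {n k : ℕ}

private def pj (n k : ℕ) (hkn : k < n) (j : Fin n) : Equiv.Perm (Fin n) :=
  Equiv.swap ⟨k - 1, by omega⟩ j * Equiv.swap j ⟨k, hkn⟩

variable (hkn : k < n) (hk : 1 ≤ k) {j : Fin n} (hj : k ≤ (j : ℕ))
set_option linter.unusedSectionVars false
include hkn hk hj

private lemma pj_ne_aj : (⟨k - 1, by omega⟩ : Fin n) ≠ j := by
  intro h
  have := congrArg Fin.val h
  simp at this; omega

private lemma pj_ne_ab : (⟨k - 1, by omega⟩ : Fin n) ≠ (⟨k, hkn⟩ : Fin n) := by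
  intro h
  have := congrArg Fin.val h
  simp at this; omega

private lemma pj_apply_a : pj n k hkn j ⟨k - 1, by omega⟩ = j := by
  rw [pj, Equiv.Perm.mul_apply,
    Equiv.swap_apply_of_ne_of_ne (pj_ne_aj hkn hk hj) (pj_ne_ab hkn hk hj),
    Equiv.swap_apply_left]

private lemma pj_apply_b : pj n k hkn j ⟨k, hkn⟩ = ⟨k - 1, by omega⟩ := by
  rw [pj, Equiv.Perm.mul_apply, Equiv.swap_apply_right, Equiv.swap_apply_right]

private lemma pj_apply_fix (x : Fin n) (hxa : x ≠ ⟨k - 1, by omega⟩) (hxb : x ≠ ⟨k, hkn⟩)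
    (hxj : x ≠ j) : pj n k hkn j x = x := by
  rw [pj, Equiv.Perm.mul_apply, Equiv.swap_apply_of_ne_of_ne hxj hxb,
    Equiv.swap_apply_of_ne_of_ne hxa hxj]

private lemma pj_inv_j : (pj n k hkn j)⁻¹ j = ⟨k - 1, by omega⟩ := by
  rw [Equiv.Perm.inv_eq_iff_eq, pj_apply_a hkn hk hj]

private lemma pj_inv_a : (pj n k hkn j)⁻¹ ⟨k - 1, by omega⟩ = ⟨k, hkn⟩ := by
  rw [Equiv.Perm.inv_eq_iff_eq, pj_apply_b hkn hk hj]

private lemma pj_inv_fix (x : Fin n) (hxa : x ≠ ⟨k - 1, by omega⟩) (hxb : x ≠ ⟨k, hkn⟩)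
    (hxj : x ≠ j) : (pj n k hkn j)⁻¹ x = x := by
  rw [Equiv.Perm.inv_eq_iff_eq, pj_apply_fix hkn hk hj x hxa hxb hxj]

set_option maxHeartbeats 2000000 in
private lemma conj_mem (σ' : Equiv.Perm (Fin n)) :
    σ' ∈ cosetC n (k + 1) ↔
      (pj n k hkn j * σ' * (pj n k hkn j)⁻¹ ∈ cosetC n k ∧
        (pj n k hkn j * σ' * (pj n k hkn j)⁻¹) ⟨k - 2, by omega⟩ = j) := by
  set π := pj n k hkn j with hπ
  constructor
  · intro hσ'
    obtain ⟨h1, h2⟩ := (memC_iff (by omega) (by omega) σ').1 hσ'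
    have h2' : σ' ⟨k, hkn⟩ = ⟨0, by omega⟩ := h2 (by omega)
    have hval : (π * σ' * π⁻¹) ⟨k - 2, by omega⟩ = j := by
      rcases Nat.lt_or_ge k 2 with hk2 | hk2
      · -- k = 1 : ⟨k-2⟩ = ⟨k-1⟩ = a
        have hkeq : k = 1 := by omega
        have ha : (⟨k - 2, by omega⟩ : Fin n) = (⟨k - 1, by omega⟩ : Fin n) :=
          Fin.ext (by simp; omega)
        rw [Equiv.Perm.mul_apply, Equiv.Perm.mul_apply, ha, pj_inv_a hkn hk hj, h2']
        have h0a : (⟨0, by omega⟩ : Fin n) = (⟨k - 1, by omega⟩ : Fin n) :=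
          Fin.ext (by simp; omega)
        rw [h0a]
        exact pj_apply_a hkn hk hj
      · have hfix : π⁻¹ ⟨k - 2, by omega⟩ = ⟨k - 2, by omega⟩ := by
          refine pj_inv_fix hkn hk hj _ ?_ ?_ ?_ <;>
          · intro h; have := congrArg Fin.val h; simp at this; omega
        rw [Equiv.Perm.mul_apply, Equiv.Perm.mul_apply, hfix]
        have := h1 ⟨k - 2, by omega⟩ (by simp; omega)
        rw [this]
        have hx : (⟨(⟨k - 2, by omega⟩ : Fin n) + 1, by simp; omega⟩ : Fin n) =
            (⟨k - 1, by omega⟩ : Fin n) := Fin.ext (by simp; omega)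
        rw [hx]
        exact pj_apply_a hkn hk hj
    refine ⟨(memC_iff hk (by omega) _).2 ⟨?_, ?_⟩, hval⟩
    · intro i hi
      have hfix : π⁻¹ i = i := by
        refine pj_inv_fix hkn hk hj _ ?_ ?_ ?_ <;>
        · intro h; have := congrArg Fin.val h; (try simp at this); omega
      rw [Equiv.Perm.mul_apply, Equiv.Perm.mul_apply, hfix, h1 i (by omega)]
      refine pj_apply_fix hkn hk hj _ ?_ ?_ ?_ <;>
      · intro h; have := congrArg Fin.val h; simp at this; omega
    · intro hk2
      rw [Equiv.Perm.mul_apply, Equiv.Perm.mul_apply, pj_inv_a hkn hk hj, h2']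
      refine pj_apply_fix hkn hk hj _ ?_ ?_ ?_ <;>
      · intro h; have := congrArg Fin.val h; simp at this; omega
  · rintro ⟨hc, hval⟩
    obtain ⟨h1, h2⟩ := (memC_iff hk (by omega) _).1 hc
    refine (memC_iff (by omega) (by omega) σ').2 ⟨?_, ?_⟩
    · intro i hi
      have hi2 : (i : ℕ) + 2 ≤ k := by omega
      have hσi : σ' i = π⁻¹ ((π * σ' * π⁻¹) (π i)) := by
        simp [Equiv.Perm.mul_apply]
      rcases Nat.lt_or_ge ((i : ℕ) + 3) (k + 1) with h3 | h3
      · -- i + 3 ≤ k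
        have hfix : π i = i := by
          refine pj_apply_fix hkn hk hj _ ?_ ?_ ?_ <;>
          · intro h; have := congrArg Fin.val h; (try simp at this); omega
        rw [hσi, hfix, h1 i (by omega)]
        refine pj_inv_fix hkn hk hj _ ?_ ?_ ?_ <;>
        · intro h; have := congrArg Fin.val h; simp at this; omega
      · -- i = k - 2, k ≥ 2
        have hik : (i : ℕ) = k - 2 ∧ 2 ≤ k := by omega
        have hieq : i = ⟨k - 2, by omega⟩ := Fin.ext (by simp; omega)
        have hfix : π i = i := by
          refine pj_apply_fix hkn hk hj _ ?_ ?_ ?_ <;>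
          · intro h; have := congrArg Fin.val h; (try simp at this); omega
        have hval' : (π * σ' * π⁻¹) i = j := by rw [hieq]; exact hval
        rw [hσi, hfix, hval', pj_inv_j hkn hk hj]
        exact Fin.ext (by simp; omega)
    · intro _
      have hb : (⟨k + 1 - 1, by omega⟩ : Fin n) = (⟨k, hkn⟩ : Fin n) := Fin.ext (by simp)
      rw [hb]
      have hσb : σ' ⟨k, hkn⟩ = π⁻¹ ((π * σ' * π⁻¹) (π ⟨k, hkn⟩)) := by
        simp [Equiv.Perm.mul_apply]
      rw [hσb, pj_apply_b hkn hk hj]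
      rcases Nat.lt_or_ge k 2 with hk2 | hk2
      · have ha : (⟨k - 1, by omega⟩ : Fin n) = (⟨k - 2, by omega⟩ : Fin n) :=
          Fin.ext (by simp; omega)
        rw [ha, hval, pj_inv_j hkn hk hj]
        exact Fin.ext (by simp; omega)
      · rw [h2 hk2]
        refine Fin.ext ?_
        rw [pj_inv_fix hkn hk hj _ ?_ ?_ ?_] <;>
        · try intro h; have := congrArg Fin.val h; simp at this; omega
    
end Claim2

section Assembly

private lemma count_A1 (q n k : ℕ) (hk : 1 ≤ k) (hkn : k < n) :
    {σ : Equiv.Perm (Fin n) | σ ∈ cosetC n k ∧ NoCycleLenMulOf q σ ∧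
        σ ⟨k - 2, by omega⟩ = ⟨k - 1, by omega⟩}.ncard =
      (if ¬ q ∣ k then 1 else 0) *
        {σ : Equiv.Perm (Fin (n - k)) | NoCycleLenMulOf q σ}.ncard := by
  by_cases hq : q ∣ k
  · rw [if_neg (by simpa using hq), zero_mul,
      Set.ncard_eq_zero (Set.toFinite _)]
    rw [Set.eq_empty_iff_forall_notMem]
    rintro σ ⟨hmem, hgood, hv⟩
    obtain ⟨τ, rfl⟩ := phi_surj σ hk hkn hmem hv
    exact ((good_phi q τ hkn hk).1 hgood).1 hq
  · rw [if_pos hq, one_mul, ← Nat.card_coe_set_eq, ← Nat.card_coe_set_eq]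
    have hbij : Function.Bijective
        (fun τ : ↥{σ : Equiv.Perm (Fin (n - k)) | NoCycleLenMulOf q σ} =>
          (⟨phi n k τ.1, (phi_mem τ.1 hk hkn).1, (good_phi q τ.1 hkn hk).2 ⟨hq, τ.2⟩,
            (phi_mem τ.1 hk hkn).2⟩ :
            ↥{σ : Equiv.Perm (Fin n) | σ ∈ cosetC n k ∧ NoCycleLenMulOf q σ ∧
              σ ⟨k - 2, by omega⟩ = ⟨k - 1, by omega⟩})) := by
      constructor
      · rintro ⟨τ1, h1⟩ ⟨τ2, h2⟩ h
        have h' : phi n k τ1 = phi n k τ2 := congrArg Subtype.val h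
        have h'' : τ1.extendDomain (emb n k) = τ2.extendDomain (emb n k) :=
          mul_right_cancel h'
        refine Subtype.ext (Equiv.ext fun i => ?_)
        have t1 : τ1.extendDomain (emb n k) ((emb n k i : Fin n)) =
            τ2.extendDomain (emb n k) ((emb n k i : Fin n)) := by rw [h'']
        rw [Equiv.Perm.extendDomain_apply_image, Equiv.Perm.extendDomain_apply_image] at t1
        exact (emb n k).injective (Subtype.ext t1)
      · rintro ⟨σ, hmem, hgood, hv⟩
        obtain ⟨τ, rfl⟩ := phi_surj σ hk hkn hmem hv
        exact ⟨⟨τ, ((good_phi q τ hkn hk).1 hgood).2⟩, rfl⟩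
    exact (Nat.card_congr (Equiv.ofBijective _ hbij)).symm

private lemma count_A2 (q n k : ℕ) (hk : 1 ≤ k) (hkn : k < n) :
    {σ : Equiv.Perm (Fin n) | σ ∈ cosetC n k ∧ NoCycleLenMulOf q σ ∧
        σ ⟨k - 2, by omega⟩ ≠ ⟨k - 1, by omega⟩}.ncard =
      (n - k) * {σ ∈ cosetC n (k + 1) | NoCycleLenMulOf q σ}.ncard := by
  rw [← Nat.card_coe_set_eq, ← Nat.card_coe_set_eq]
  have hbij : Function.Bijective
      (fun x : {j : Fin n // k ≤ (j : ℕ)} × ↥{σ ∈ cosetC n (k + 1) | NoCycleLenMulOf q σ} =>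
        (⟨pj n k hkn x.1.1 * x.2.1 * (pj n k hkn x.1.1)⁻¹, by
            obtain ⟨⟨j, hj⟩, ⟨σ', hσ'⟩⟩ := x
            obtain ⟨hmem, hval⟩ := (conj_mem hkn hk hj σ').1 hσ'.1
            refine ⟨hmem, (good_conj q _ σ').2 hσ'.2, ?_⟩
            rw [hval]
            intro h
            have := congrArg Fin.val h
            simp at this; omega⟩ :
          ↥{σ : Equiv.Perm (Fin n) | σ ∈ cosetC n k ∧ NoCycleLenMulOf q σ ∧
            σ ⟨k - 2, by omega⟩ ≠ ⟨k - 1, by omega⟩})) := by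
    constructor
    · rintro ⟨⟨j1, hj1⟩, ⟨σ1, hσ1⟩⟩ ⟨⟨j2, hj2⟩, ⟨σ2, hσ2⟩⟩ h
      have hval : pj n k hkn j1 * σ1 * (pj n k hkn j1)⁻¹ =
          pj n k hkn j2 * σ2 * (pj n k hkn j2)⁻¹ := congrArg Subtype.val h
      have v1 := ((conj_mem hkn hk hj1 σ1).1 hσ1.1).2
      have v2 := ((conj_mem hkn hk hj2 σ2).1 hσ2.1).2
      have hjeq : j1 = j2 := by rw [← v1, hval, v2]
      subst hjeq
      have hσeq : σ1 = σ2 := mul_left_cancel (mul_right_cancel hval)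
      subst hσeq
      rfl
    · rintro ⟨σ, hmem, hgood, hne⟩
      rcases val_restrict hk hkn σ hmem with hv | hv
      · exact absurd hv hne
      have hπσ : pj n k hkn (σ ⟨k - 2, by omega⟩) *
          ((pj n k hkn (σ ⟨k - 2, by omega⟩))⁻¹ * σ * pj n k hkn (σ ⟨k - 2, by omega⟩)) *
          (pj n k hkn (σ ⟨k - 2, by omega⟩))⁻¹ = σ := by group
      refine ⟨⟨⟨σ ⟨k - 2, by omega⟩, hv⟩,
        ⟨(pj n k hkn (σ ⟨k - 2, by omega⟩))⁻¹ * σ * pj n k hkn (σ ⟨k - 2, by omega⟩), ?_, ?_⟩⟩,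
        Subtype.ext ?_⟩
      · refine (conj_mem hkn hk hv _).2 ⟨?_, ?_⟩
        · rw [hπσ]; exact hmem
        · rw [hπσ]
      · exact (good_conj q (pj n k hkn (σ ⟨k - 2, by omega⟩)) _).1 (by rw [hπσ]; exact hgood)
      · exact hπσ
  rw [← Nat.card_congr (Equiv.ofBijective _ hbij), Nat.card_prod]
  congr 1
  rw [Nat.card_congr (emb n k).symm, Nat.card_eq_fintype_card, Fintype.card_fin]

end Assembly

theorem stmt_3 (q n k : ℕ) (hk : 1 ≤ k) (hkn : k < n) :
    {σ ∈ cosetC n k | NoCycleLenMulOf q σ}.ncard =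
      (if ¬ q ∣ k then 1 else 0) *
          {σ : Equiv.Perm (Fin (n - k)) | NoCycleLenMulOf q σ}.ncard +
        (n - k) * {σ ∈ cosetC n (k + 1) | NoCycleLenMulOf q σ}.ncard := by
  have hsplit : {σ ∈ cosetC n k | NoCycleLenMulOf q σ} =
      {σ : Equiv.Perm (Fin n) | σ ∈ cosetC n k ∧ NoCycleLenMulOf q σ ∧
        σ ⟨k - 2, by omega⟩ = ⟨k - 1, by omega⟩} ∪
      {σ : Equiv.Perm (Fin n) | σ ∈ cosetC n k ∧ NoCycleLenMulOf q σ ∧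
        σ ⟨k - 2, by omega⟩ ≠ ⟨k - 1, by omega⟩} := by
    ext σ
    simp only [Set.mem_setOf_eq, Set.mem_union, Set.mem_sep_iff]
    tauto
  have hdisj : Disjoint
      {σ : Equiv.Perm (Fin n) | σ ∈ cosetC n k ∧ NoCycleLenMulOf q σ ∧
        σ ⟨k - 2, by omega⟩ = ⟨k - 1, by omega⟩}
      {σ : Equiv.Perm (Fin n) | σ ∈ cosetC n k ∧ NoCycleLenMulOf q σ ∧
        σ ⟨k - 2, by omega⟩ ≠ ⟨k - 1, by omega⟩} := by
    rw [Set.disjoint_left]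
    rintro σ ⟨_, _, h⟩ ⟨_, _, h'⟩
    exact h' h
  rw [hsplit, Set.ncard_union_eq hdisj (Set.toFinite _) (Set.toFinite _),
    count_A1 q n k hk hkn, count_A2 q n k hk hkn]
end Claim1
end

section
/- For integers q, n, k with 1 ≤ k < n, the number of elements x of C_{n,k} with x^q = 1 satisfies: OD_q(C_{n,k}) = [k ∣ q]·OD_q(S_{n-k}) + (n-k)·OD_q(C_{n,k+1}). -/
namespace Stmt5Aux
open Equiv Equiv.Perm

variable {n k : ℕ}

/-- The cycle (0 1 ... k-1) as a permutation of `Fin n`. -/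
abbrev P (n k : ℕ) : Equiv.Perm (Fin n) := ((List.finRange n).take k).formPerm

lemma P_nodup : ((List.finRange n).take k).Nodup :=
  (List.take_sublist _ _).nodup (List.nodup_finRange n)

lemma P_len (hkn : k ≤ n) : ((List.finRange n).take k).length = k := by simp [hkn]

lemma P_apply (hkn : k ≤ n) {m : ℕ} (hm : m < k) (h1 : m < n) (h2 : (m+1) % k < n) :
    P n k ⟨m, h1⟩ = ⟨(m+1) % k, h2⟩ := by
  have := List.formPerm_apply_getElem _ (P_nodup (n := n) (k := k)) m (by
    rw [P_len hkn]; exact hm)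
  simpa [List.getElem_take, P_len hkn] using this

lemma P_fix {m : ℕ} (hm : k ≤ m) (h1 : m < n) :
    P n k ⟨m, h1⟩ = ⟨m, h1⟩ := by
  apply List.formPerm_apply_of_notMem
  rw [List.mem_iff_getElem]
  rintro ⟨i, hi, hx⟩
  rw [List.getElem_take] at hx
  have : i < k := by
    have := hi; rw [List.length_take, List.length_finRange] at this; omega
  simp at hx
  omega

lemma P_inv_apply (hkn : k ≤ n) {m : ℕ} (hm : m < k) (h1 : m < n) (h2 : (m+1) % k < n) :
    (P n k)⁻¹ ⟨(m+1) % k, h2⟩ = ⟨m, h1⟩ := by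
  rw [← P_apply hkn hm h1 h2, ← Equiv.Perm.mul_apply, inv_mul_cancel, Equiv.Perm.one_apply]

lemma P_order (hk : 1 ≤ k) (hkn : k ≤ n) : orderOf (P n k) = k := by
  show orderOf ((List.finRange n).take k).formPerm = k
  rcases eq_or_lt_of_le hk with h1 | h2
  · rw [(List.formPerm_eq_one_iff _ P_nodup).2 (by rw [P_len hkn]; omega)]
    simp [← h1]
  · have hc := List.isCycle_formPerm P_nodup (by rw [P_len hkn]; omega)
    rw [hc.orderOf, List.support_formPerm_of_nodup _ P_nodup, List.card_toFinset,
      List.Nodup.dedup P_nodup, P_len hkn]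
    rintro x hx
    have := congrArg List.length hx
    rw [P_len hkn] at this
    simp at this
    omega

lemma mem_iff {σ : Equiv.Perm (Fin n)} :
    σ ∈ cosetC n k ↔ ∀ i : Fin n, (i : ℕ) < k - 1 → (σ * (P n k)⁻¹) i = i := by
  constructor
  · rintro ⟨g, hg, rfl⟩ i hi
    simpa [mul_assoc] using hg i hi
  · intro h
    exact ⟨σ * (P n k)⁻¹, h, by simp [mul_assoc]⟩


lemma order_g_mul_P (hk : 1 ≤ k) (hkn : k ≤ n) {g : Equiv.Perm (Fin n)}
    (hg : ∀ x : Fin n, (x : ℕ) < k → g x = x) :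
    orderOf (g * P n k) = Nat.lcm (orderOf g) k := by
  have hd : Equiv.Perm.Disjoint g (P n k) := by
    intro x
    rcases Nat.lt_or_ge (x : ℕ) k with h | h
    · exact Or.inl (hg x h)
    · exact Or.inr (by have := P_fix (n := n) (k := k) h x.2; simpa using this)
  rw [hd.orderOf, P_order hk hkn]

/-- The order-preserving identification of `Fin (n-k)` with the subtype of `Fin n`. -/
def eSub (hkn : k ≤ n) : Fin (n - k) ≃ {x : Fin n // k ≤ (x : ℕ)} where
  toFun i := ⟨⟨(i : ℕ) + k, by omega⟩, by simp⟩
  invFun x := ⟨(x.1 : ℕ) - k, by have := x.1.2; have := x.2; omega⟩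
  left_inv i := by ext; simp
  right_inv x := by
    have := x.2
    ext
    simp
    omega

/-- `Perm (Fin (n-k))` as a multiplicative equiv onto perms of the subtype. -/
def ME (hkn : k ≤ n) : Equiv.Perm (Fin (n - k)) ≃* Equiv.Perm {x : Fin n // k ≤ (x : ℕ)} where
  toEquiv := (eSub hkn).permCongr
  map_mul' p q := by
    ext x
    simp [Equiv.permCongr_apply]

lemma ofSubtype_inj : Function.Injective
    (ofSubtype : Equiv.Perm {x : Fin n // k ≤ (x : ℕ)} →* Equiv.Perm (Fin n)) := by
  intro f f' h
  have h1 := subtypePerm_ofSubtype f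
  have h2 := subtypePerm_ofSubtype f'
  rw [← h1, ← h2]
  congr 1

lemma orderOf_ofSubtype_ME (hkn : k ≤ n) (τ : Equiv.Perm (Fin (n - k))) :
    orderOf (ofSubtype ((ME hkn) τ)) = orderOf τ := by
  rw [orderOf_injective (ofSubtype) ofSubtype_inj]
  exact orderOf_injective (ME hkn).toMonoidHom (ME hkn).injective τ

/-- Lift of a permutation of `Fin (n-k)`, times the `k`-cycle. -/
noncomputable def Psi (hkn : k ≤ n) (τ : Equiv.Perm (Fin (n - k))) : Equiv.Perm (Fin n) :=
  ofSubtype ((ME hkn) τ) * P n k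

lemma Psi_inj (hkn : k ≤ n) : Function.Injective (Psi hkn) := by
  intro a b h
  have := mul_right_cancel h
  exact (ME hkn).injective (ofSubtype_inj this)

lemma Psi_fst_fix (hkn : k ≤ n) (τ : Equiv.Perm (Fin (n - k))) (x : Fin n) (hx : (x : ℕ) < k) :
    ofSubtype ((ME hkn) τ) x = x :=
  ofSubtype_apply_of_not_mem _ (by omega)

/-- A permutation fixing everything below `k` comes from the subtype. -/
lemma exists_of_fix (hkn : k ≤ n) {g : Equiv.Perm (Fin n)}
    (hg : ∀ x : Fin n, (x : ℕ) < k → g x = x) :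
    ∃ τ, ofSubtype ((ME hkn) τ) = g ∧ orderOf τ = orderOf g := by
  have hp : ∀ x : Fin n, k ≤ (x : ℕ) ↔ k ≤ (g x : ℕ) := by
    intro x
    constructor
    · intro hx
      by_contra hgx
      have := hg (g x) (by omega)
      have := g.injective this
      rw [this] at hgx
      omega
    · intro hx
      by_contra hxx
      rw [hg x (by omega)] at hx
      omega
  have hp := fun x => (hp x).symm
  refine ⟨(ME hkn).symm (g.subtypePerm hp), ?_, ?_⟩
  · rw [MulEquiv.apply_symm_apply]
    exact ofSubtype_subtypePerm hp (fun x hx => by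
      by_contra hc
      exact hx (hg x (by omega)))
  · have h1 := orderOf_injective (ME hkn).toMonoidHom (ME hkn).injective
        ((ME hkn).symm (g.subtypePerm hp))
    have h2 : (ME hkn) ((ME hkn).symm (g.subtypePerm hp)) = g.subtypePerm hp :=
      MulEquiv.apply_symm_apply _ _
    have h3 := orderOf_injective (ofSubtype) (ofSubtype_inj (n := n) (k := k)) (g.subtypePerm hp)
    rw [ofSubtype_subtypePerm hp (fun x hx => by by_contra hc; exact hx (hg x (by omega)))] at h3
    simp only [MulEquiv.coe_toMonoidHom] at h1
    rw [← h1, h2, ← h3]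


lemma Fne {a b : ℕ} (ha : a < n) (hb : b < n) (h : a ≠ b) :
    (⟨a, ha⟩ : Fin n) ≠ ⟨b, hb⟩ := fun hc => h (by injection hc)

lemma FneR {a : ℕ} (ha : a < n) {x : Fin n} (h : a ≠ (x : ℕ)) :
    (⟨a, ha⟩ : Fin n) ≠ x := fun hc => h (congrArg Fin.val hc)

lemma P_inv_zero (hk : 1 ≤ k) (hkn : k ≤ n) (h0 : 0 < n) (hk1 : k - 1 < n) :
    (P n k)⁻¹ ⟨0, h0⟩ = ⟨k - 1, hk1⟩ := by
  have hmod : (k - 1 + 1) % k = 0 := by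
    have h : k - 1 + 1 = k := by omega
    rw [h, Nat.mod_self]
  rw [Equiv.Perm.inv_eq_iff_eq, P_apply hkn (by omega) hk1 (by rw [hmod]; omega)]
  simp only [Fin.mk.injEq, hmod]

lemma P_inv_succ (hkn : k ≤ n) {m : ℕ} (hm : m + 1 < k) (h1 : m + 1 < n) (h2 : m < n) :
    (P n k)⁻¹ ⟨m + 1, h1⟩ = ⟨m, h2⟩ := by
  have hmod : (m + 1) % k = m + 1 := Nat.mod_eq_of_lt hm
  rw [Equiv.Perm.inv_eq_iff_eq, P_apply hkn (by omega) h2 (by rw [hmod]; exact h1)]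
  simp only [Fin.mk.injEq, hmod]

/-- The conjugating permutation. -/
def piP (hk : 1 ≤ k) (hkn : k < n) (j : Fin n) : Equiv.Perm (Fin n) :=
  swap ⟨k - 1, by omega⟩ ⟨k, hkn⟩ * swap ⟨k, hkn⟩ j

section
variable (hk : 1 ≤ k) (hkn : k < n) {j : Fin n} (hj : k ≤ (j : ℕ))

include hk hkn hj in
lemma swapkj_fix {m : ℕ} (hm : m < k) (h1 : m < n) :
    swap ⟨k, hkn⟩ j ⟨m, h1⟩ = ⟨m, h1⟩ :=
  swap_apply_of_ne_of_ne (Fne _ _ (by omega)) (FneR _ (by omega))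

include hk hkn hj in
lemma pi_fix {m : ℕ} (hm : m < k - 1) (h1 : m < n) :
    piP hk hkn j ⟨m, h1⟩ = ⟨m, h1⟩ := by
  rw [piP, mul_apply, swapkj_fix hk hkn hj (by omega) h1,
    swap_apply_of_ne_of_ne (Fne _ _ (by omega)) (Fne _ _ (by omega))]

include hk hkn hj in
lemma pi_j : piP hk hkn j j = ⟨k - 1, by omega⟩ := by
  rw [piP, mul_apply, swap_apply_right, swap_apply_right]

include hk hkn hj in
lemma pi_a : piP hk hkn j ⟨k - 1, by omega⟩ = ⟨k, hkn⟩ := by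
  rw [piP, mul_apply, swapkj_fix hk hkn hj (by omega) (by omega), swap_apply_left]

include hk hkn hj in
lemma pi_inv_fix {m : ℕ} (hm : m < k - 1) (h1 : m < n) :
    (piP hk hkn j)⁻¹ ⟨m, h1⟩ = ⟨m, h1⟩ := by
  rw [Equiv.Perm.inv_eq_iff_eq, pi_fix hk hkn hj hm h1]

include hk hkn hj in
lemma pi_inv_a : (piP hk hkn j)⁻¹ ⟨k - 1, by omega⟩ = j := by
  rw [Equiv.Perm.inv_eq_iff_eq, pi_j hk hkn hj]

include hk hkn hj in
lemma pi_inv_b : (piP hk hkn j)⁻¹ ⟨k, hkn⟩ = ⟨k - 1, by omega⟩ := by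
  rw [Equiv.Perm.inv_eq_iff_eq, pi_a hk hkn hj]

include hk hkn hj in
lemma conj_mem_iff (σ : Equiv.Perm (Fin n)) :
    (σ ∈ cosetC n k ∧ (σ * (P n k)⁻¹) ⟨k - 1, by omega⟩ = j) ↔
      piP hk hkn j * σ * (piP hk hkn j)⁻¹ ∈ cosetC n (k + 1) := by
  have hkn' : k + 1 ≤ n := hkn
  constructor
  · rintro ⟨⟨g, hgfix, rfl⟩, hval⟩
    have hgP : g * ((List.finRange n).take k).formPerm * (P n k)⁻¹ = g := by
      show g * P n k * (P n k)⁻¹ = g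
      group
    rw [hgP] at hval
    -- σ = g * P n k
    -- values
    have hσ_chain : ∀ m : ℕ, m + 3 ≤ k → ∀ (h1 : m < n) (h2 : m + 1 < n),
        g (P n k ⟨m, h1⟩) = ⟨m + 1, h2⟩ := by
      intro m hm h1 h2
      have hmod : (m + 1) % k = m + 1 := Nat.mod_eq_of_lt (by omega)
      rw [P_apply (by omega) (by omega) h1 (by rw [hmod]; omega)]
      simp only [hmod]
      rw [hgfix _ (by show m + 1 < k - 1; omega)]
    have hσ_pre : 2 ≤ k → g (P n k ⟨k - 2, by omega⟩) = j := by
      intro h2k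
      have hmod : (k - 2 + 1) % k = k - 1 := by
        rw [show k - 2 + 1 = k - 1 by omega]
        exact Nat.mod_eq_of_lt (by omega)
      rw [P_apply (by omega) (by omega) (by omega) (by rw [hmod]; omega)]
      simp only [hmod]
      exact hval
    have hσ_last : 2 ≤ k → g (P n k ⟨k - 1, by omega⟩) = ⟨0, by omega⟩ := by
      intro h2k
      have hmod : (k - 1 + 1) % k = 0 := by
        rw [show k - 1 + 1 = k by omega, Nat.mod_self]
      rw [P_apply (by omega) (by omega) (by omega) (by rw [hmod]; omega)]
      simp only [hmod]
      rw [hgfix _ (by show 0 < k - 1; omega)]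
    have hσ_01 : k = 1 → g (P n k ⟨0, by omega⟩) = j := by
      intro h1k
      have hmod : (0 + 1) % k = 0 := by rw [h1k]
      rw [P_apply (by omega) (by omega) (by omega) (by rw [hmod]; omega)]
      simp only [hmod]
      rw [show (⟨0, by omega⟩ : Fin n) = ⟨k - 1, by omega⟩ by simp only [Fin.mk.injEq]; omega]
      exact hval
    -- prove membership
    rw [mem_iff]
    rintro ⟨iv, hivn⟩ hi
    simp only [Nat.add_sub_cancel] at hi
    simp only [mul_apply]
    rcases iv with _ | m
    · -- iv = 0
      rw [show ((P n (k+1))⁻¹ ⟨0, by omega⟩ : Fin n) = ⟨k, hkn⟩ by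
          rw [P_inv_zero (by omega) hkn' (by omega) (by omega)]
          simp only [Fin.mk.injEq]; omega,
        pi_inv_b hk hkn hj]
      rcases eq_or_lt_of_le hk with h1 | h2
      · -- k = 1
        rw [show (⟨k - 1, by omega⟩ : Fin n) = ⟨0, by omega⟩ by simp only [Fin.mk.injEq]; omega,
          hσ_01 (by omega), pi_j hk hkn hj]
        simp only [Fin.mk.injEq]; omega
      · rw [hσ_last (by omega), pi_fix hk hkn hj (by omega) (by omega)]
    · -- iv = m + 1
      have hm1 : m + 1 < k := hi
      rw [show ((P n (k+1))⁻¹ ⟨m + 1, by omega⟩ : Fin n) = ⟨m, by omega⟩ from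
          P_inv_succ hkn' (by omega) (by omega) (by omega),
        pi_inv_fix hk hkn hj (by omega) (by omega)]
      rcases eq_or_lt_of_le (show m + 2 ≤ k by omega) with h1 | h2
      · -- m + 1 = k - 1
        rw [show (⟨m, by omega⟩ : Fin n) = ⟨k - 2, by omega⟩ by simp only [Fin.mk.injEq]; omega,
          hσ_pre (by omega), pi_j hk hkn hj]
        simp only [Fin.mk.injEq]; omega
      · rw [hσ_chain m (by omega) (by omega) (by omega),
          pi_fix hk hkn hj (by omega) (by omega)]
  · intro hmem'
    have hτ := mem_iff.1 hmem'
    set τ := piP hk hkn j * σ * (piP hk hkn j)⁻¹ with hτdef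
    have hστ : σ = (piP hk hkn j)⁻¹ * τ * piP hk hkn j := by
      rw [hτdef]; group
    -- τ values
    have hτ_chain : ∀ m : ℕ, m + 2 ≤ k → ∀ (h1 : m < n) (h2 : m + 1 < n),
        τ ⟨m, h1⟩ = ⟨m + 1, h2⟩ := by
      intro m hm h1 h2
      have := hτ ⟨m + 1, h2⟩ (by simpa using (by omega : m + 1 < k))
      rw [mul_apply, P_inv_succ hkn' (by omega) h2 h1] at this
      exact this
    have hτ_top : τ ⟨k, hkn⟩ = ⟨0, by omega⟩ := by
      have := hτ ⟨0, by omega⟩ (by simpa using (by omega : 0 < k))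
      rw [mul_apply, P_inv_zero (by omega) hkn' (by omega) (by omega)] at this
      rw [show (⟨k + 1 - 1, by omega⟩ : Fin n) = ⟨k, hkn⟩ by simp only [Fin.mk.injEq]; omega] at this
      exact this
    constructor
    · rw [mem_iff]
      rintro ⟨iv, hivn⟩ hi
      have hiv : iv < k - 1 := hi
      simp only [mul_apply]
      rcases iv with _ | m
      · rw [P_inv_zero hk (by omega) (by omega) (by omega), hστ]
        simp only [mul_apply]
        rw [pi_a hk hkn hj, hτ_top, pi_inv_fix hk hkn hj (by omega) (by omega)]
      · rw [P_inv_succ (by omega) (by omega) (by omega) (by omega), hστ]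
        simp only [mul_apply]
        rw [pi_fix hk hkn hj (by omega) (by omega),
          hτ_chain m (by omega) (by omega) (by omega),
          pi_inv_fix hk hkn hj (by omega) (by omega)]
    · rcases eq_or_lt_of_le hk with h1 | h2
      · -- k = 1
        rw [mul_apply,
          show ((P n k)⁻¹ ⟨k - 1, by omega⟩ : Fin n) = ⟨k - 1, by omega⟩ by
            rw [show (⟨k - 1, by omega⟩ : Fin n) = ⟨0, by omega⟩ by simp only [Fin.mk.injEq]; omega,
              P_inv_zero hk (by omega) (by omega) (by omega)]
            simp only [Fin.mk.injEq]; omega,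
          hστ]
        simp only [mul_apply]
        rw [pi_a hk hkn hj,
          show (⟨k, hkn⟩ : Fin n) = ⟨k, by omega⟩ from rfl, hτ_top,
          show ((⟨0, by omega⟩ : Fin n)) = ⟨k - 1, by omega⟩ by simp only [Fin.mk.injEq]; omega,
          pi_inv_a hk hkn hj]
      · rw [mul_apply,
          show ((P n k)⁻¹ ⟨k - 1, by omega⟩ : Fin n) = ⟨k - 2, by omega⟩ by
            rw [show (⟨k - 1, by omega⟩ : Fin n) = ⟨(k - 2) + 1, by omega⟩ by simp only [Fin.mk.injEq]; omega]
            exact P_inv_succ (by omega) (by omega) (by omega) (by omega),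
          hστ]
        simp only [mul_apply]
        rw [pi_fix hk hkn hj (by omega) (by omega),
          hτ_chain (k - 2) (by omega) (by omega) (by omega),
          show (⟨k - 2 + 1, by omega⟩ : Fin n) = ⟨k - 1, by omega⟩ by simp only [Fin.mk.injEq]; omega,
          pi_inv_a hk hkn hj]


end

section
variable {n k : ℕ}

lemma fix_iff (hk : 1 ≤ k) (hkn : k < n) {σ : Equiv.Perm (Fin n)} :
    (σ ∈ cosetC n k ∧ (σ * (P n k)⁻¹) ⟨k - 1, by omega⟩ = ⟨k - 1, by omega⟩) ↔
      ∃ g : Equiv.Perm (Fin n), (∀ x : Fin n, (x : ℕ) < k → g x = x) ∧ σ = g * P n k := by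
  constructor
  · rintro ⟨⟨g, hgfix, rfl⟩, hval⟩
    have hgP : g * ((List.finRange n).take k).formPerm * (P n k)⁻¹ = g := by
      show g * P n k * (P n k)⁻¹ = g; group
    rw [hgP] at hval
    refine ⟨g, fun x hx => ?_, rfl⟩
    rcases Nat.lt_or_ge (x : ℕ) (k - 1) with h | h
    · exact hgfix x h
    · have hx1 : x = ⟨k - 1, by omega⟩ := Fin.ext (show (x : ℕ) = k - 1 by omega)
      rw [hx1]; exact hval
  · rintro ⟨g, hg, rfl⟩
    have hgP : g * P n k * (P n k)⁻¹ = g := by group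
    refine ⟨⟨g, fun i hi => hg i (by omega), rfl⟩, ?_⟩
    show (g * P n k * (P n k)⁻¹) _ = _
    rw [hgP]
    exact hg _ (by show k - 1 < k; omega)

lemma fval_ge (hk : 1 ≤ k) (hkn : k < n) {σ : Equiv.Perm (Fin n)} (hσ : σ ∈ cosetC n k) :
    k - 1 ≤ (((σ * (P n k)⁻¹) ⟨k - 1, by omega⟩ : Fin n) : ℕ) := by
  obtain ⟨g, hgfix, rfl⟩ := hσ
  have hgP : g * ((List.finRange n).take k).formPerm * (P n k)⁻¹ = g := by
    show g * P n k * (P n k)⁻¹ = g; group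
  rw [hgP]
  by_contra h
  push_neg at h
  have h2 := hgfix (g ⟨k - 1, by omega⟩) (by exact h)
  have h3 := g.injective h2
  rw [h3] at h
  exact absurd h (by simp)

end
end Stmt5Aux

open Equiv Equiv.Perm Stmt5Aux in
theorem stmt_5 (q n k : ℕ) (hk : 1 ≤ k) (hkn : k < n) :
    {σ ∈ cosetC n k | orderOf σ ∣ q}.ncard =
      (if k ∣ q then 1 else 0) *
          {σ : Equiv.Perm (Fin (n - k)) | orderOf σ ∣ q}.ncard +
        (n - k) * {σ ∈ cosetC n (k + 1) | orderOf σ ∣ q}.ncard := by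
  classical
  have hkn' : k ≤ n := le_of_lt hkn
  have hk1n : k - 1 < n := by omega
  set T : Set (Equiv.Perm (Fin n)) := {σ ∈ cosetC n k | orderOf σ ∣ q} with hT
  set A : Set (Equiv.Perm (Fin n)) :=
    {σ ∈ T | (σ * (P n k)⁻¹) ⟨k - 1, hk1n⟩ = ⟨k - 1, hk1n⟩} with hAdef
  set T' : Set (Equiv.Perm (Fin n)) :=
    {σ ∈ T | (σ * (P n k)⁻¹) ⟨k - 1, hk1n⟩ ≠ ⟨k - 1, hk1n⟩} with hT'def
  set B : Set (Equiv.Perm (Fin n)) := {σ ∈ cosetC n (k + 1) | orderOf σ ∣ q} with hB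
  set J : Set (Fin n) := {j : Fin n | k ≤ (j : ℕ)} with hJ
  have hsplit : T.ncard = A.ncard + T'.ncard := by
    rw [show T = A ∪ T' by
      ext σ
      simp only [Set.mem_union, hAdef, hT'def, Set.mem_setOf_eq]
      by_cases h : (σ * (P n k)⁻¹) ⟨k - 1, hk1n⟩ = ⟨k - 1, hk1n⟩ <;> tauto]
    exact Set.ncard_union_eq
      (by rw [Set.disjoint_left]; rintro σ ⟨_, h1⟩ ⟨_, h2⟩; exact h2 h1)
      (Set.toFinite _) (Set.toFinite _)
  -- the A part
  have hA : A.ncard =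
      (if k ∣ q then 1 else 0) * {σ : Equiv.Perm (Fin (n - k)) | orderOf σ ∣ q}.ncard := by
    by_cases hq : k ∣ q
    · rw [if_pos hq, one_mul]
      have himg : A = Psi hkn' '' {τ : Equiv.Perm (Fin (n - k)) | orderOf τ ∣ q} := by
        ext σ
        constructor
        · rintro ⟨⟨hmem, hord⟩, hval⟩
          obtain ⟨g, hg, rfl⟩ := (fix_iff hk hkn).1 ⟨hmem, hval⟩
          have hordg : orderOf g ∣ q := by
            have h1 := order_g_mul_P hk hkn' hg
            exact dvd_trans (Nat.dvd_lcm_left _ _) (by rw [← h1]; exact hord)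
          obtain ⟨τ, hτeq, hτord⟩ := exists_of_fix hkn' hg
          refine ⟨τ, by rw [Set.mem_setOf_eq, hτord]; exact hordg, ?_⟩
          rw [Psi, hτeq]
        · rintro ⟨τ, hτ, rfl⟩
          have hfix : ∀ x : Fin n, (x : ℕ) < k → ofSubtype ((ME hkn') τ) x = x :=
            fun x hx => Psi_fst_fix hkn' τ x hx
          have hPsi : Psi hkn' τ = ofSubtype ((ME hkn') τ) * P n k := rfl
          refine ⟨⟨⟨ofSubtype ((ME hkn') τ), fun i hi => hfix i (by omega), hPsi⟩, ?_⟩, ?_⟩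
          · show orderOf (Psi hkn' τ) ∣ q
            rw [hPsi, order_g_mul_P hk hkn' hfix]
            exact Nat.lcm_dvd (by rw [orderOf_ofSubtype_ME]; exact hτ) hq
          · show (Psi hkn' τ * (P n k)⁻¹) _ = _
            rw [hPsi]
            have hgP : ofSubtype ((ME hkn') τ) * P n k * (P n k)⁻¹ =
                ofSubtype ((ME hkn') τ) := by group
            rw [hgP]
            exact hfix _ (by show k - 1 < k; omega)
      rw [himg, Set.ncard_image_of_injective _ (Psi_inj hkn')]
    · have hempty : A = ∅ := by
        ext σ
        simp only [Set.mem_empty_iff_false, iff_false]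
        rintro ⟨⟨hmem, hord⟩, hval⟩
        obtain ⟨g, hg, rfl⟩ := (fix_iff hk hkn).1 ⟨hmem, hval⟩
        rw [order_g_mul_P hk hkn' hg] at hord
        exact hq (dvd_trans (Nat.dvd_lcm_right _ _) hord)
      rw [hempty, Set.ncard_empty, if_neg hq, zero_mul]
  -- the T' part
  set Φ : Equiv.Perm (Fin n) → Fin n × Equiv.Perm (Fin n) := fun σ =>
    ((σ * (P n k)⁻¹) ⟨k - 1, hk1n⟩,
      piP hk hkn ((σ * (P n k)⁻¹) ⟨k - 1, hk1n⟩) * σ *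
        (piP hk hkn ((σ * (P n k)⁻¹) ⟨k - 1, hk1n⟩))⁻¹) with hΦ
  have hmemge : ∀ σ, σ ∈ T' → k ≤ ((((σ * (P n k)⁻¹) ⟨k - 1, hk1n⟩ : Fin n)) : ℕ) := by
    rintro σ ⟨⟨hmem, _⟩, hne⟩
    have h1 := fval_ge hk hkn hmem
    have h2 : (((σ * (P n k)⁻¹) ⟨k - 1, hk1n⟩ : Fin n) : ℕ) ≠ k - 1 :=
      fun hc => hne (Fin.ext hc)
    omega
  have himg : Φ '' T' = J ×ˢ B := by
    apply Set.Subset.antisymm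
    · rintro x ⟨σ, hσ, rfl⟩
      have hj := hmemge σ hσ
      obtain ⟨⟨hmem, hord⟩, hne⟩ := hσ
      refine Set.mk_mem_prod hj ?_
      have hc := (conj_mem_iff hk hkn hj σ).1 ⟨hmem, rfl⟩
      refine ⟨hc, ?_⟩
      have hsc : SemiconjBy (piP hk hkn ((σ * (P n k)⁻¹) ⟨k - 1, hk1n⟩)) σ
          (piP hk hkn ((σ * (P n k)⁻¹) ⟨k - 1, hk1n⟩) * σ *
            (piP hk hkn ((σ * (P n k)⁻¹) ⟨k - 1, hk1n⟩))⁻¹) := by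
        show _ * _ = _ * _; group
      show orderOf _ ∣ q
      rw [← SemiconjBy.orderOf_eq _ hsc]
      exact hord
    · rintro ⟨j, σ'⟩ ⟨hjJ, hσ'B⟩
      have hj : k ≤ (j : ℕ) := hjJ
      have hconj : piP hk hkn j * ((piP hk hkn j)⁻¹ * σ' * piP hk hkn j) *
          (piP hk hkn j)⁻¹ = σ' := by group
      have h2 := (conj_mem_iff hk hkn hj ((piP hk hkn j)⁻¹ * σ' * piP hk hkn j)).2
        (by rw [hconj]; exact hσ'B.1)
      have hsc : SemiconjBy ((piP hk hkn j)⁻¹) σ'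
          ((piP hk hkn j)⁻¹ * σ' * piP hk hkn j) := by
        show _ * _ = _ * _; group
      refine ⟨(piP hk hkn j)⁻¹ * σ' * piP hk hkn j, ⟨⟨h2.1, ?_⟩, ?_⟩, ?_⟩
      · show orderOf _ ∣ q
        rw [← SemiconjBy.orderOf_eq _ hsc]
        exact hσ'B.2
      · rw [h2.2]
        exact fun hc => by
          have := congrArg Fin.val hc
          simp only at this
          omega
      · show Φ _ = (j, σ')
        rw [hΦ]
        simp only
        rw [h2.2, hconj]
  have hinj : Set.InjOn Φ T' := by
    rintro σ₁ h₁ σ₂ h₂ heq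
    have e1 : (σ₁ * (P n k)⁻¹) ⟨k - 1, hk1n⟩ = (σ₂ * (P n k)⁻¹) ⟨k - 1, hk1n⟩ :=
      congrArg Prod.fst heq
    have e2 := congrArg Prod.snd heq
    simp only [hΦ] at e2
    rw [e1] at e2
    exact mul_left_cancel (mul_right_cancel e2)
  have hJcard : Nat.card J = n - k := by
    have h1 : Nat.card J = Nat.card (Fin (n - k)) :=
      Nat.card_congr ((Equiv.subtypeEquivRight (fun x : Fin n => Iff.rfl)).trans
        (eSub hkn').symm)
    rw [h1, Nat.card_eq_fintype_card, Fintype.card_fin]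
  have hT'card : T'.ncard = (n - k) * B.ncard := by
    rw [← Set.ncard_image_of_injOn hinj, himg]
    calc (J ×ˢ B).ncard = Nat.card (J ×ˢ B : Set _) := (Nat.card_coe_set_eq _).symm
      _ = Nat.card (↥J × ↥B) := Nat.card_congr (Equiv.Set.prod J B)
      _ = Nat.card ↥J * Nat.card ↥B := Nat.card_prod _ _
      _ = (n - k) * B.ncard := by rw [hJcard, Nat.card_coe_set_eq]
  rw [hsplit, hA, hT'card]
end
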